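/- arXiv:0812.2300 — 6 statements merged into one kernel-verified Lean document; each statement's English description precedes it below -/
import Mathlib

section
/- Let Q be a well-founded poset. Then there is no map embedding Ω̲(ω*) into I_{<ω}(Q) as a join-subsemilattice. In particular (taking Q = ℕ with the discrete/antichain order), Ω̲(ω*) does not embed into [ω]^{<ω} as a join-subsemilattice. -/
open Set

/-- The poset `Ω(ω*)`: pairs `(i,j)` of naturals with `i < j`,
ordered by `(i,j) ≤ (i',j')` iff `i' ≤ i ∧ j ≤ j'`. We only need the carrier and the join. -/
abbrev OmegaStar : Type := {p : ℕ × ℕ // p.1 < p.2}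

/-- The join in `Ω(ω*)`: `(i,j) ⊔ (i',j') = (min i i', max j j')`. -/
def omegaJoin (a b : OmegaStar) : OmegaStar :=
  ⟨(min a.1.1 b.1.1, max a.1.2 b.1.2),
    lt_of_le_of_lt (min_le_left _ _) (lt_of_lt_of_le a.2 (le_max_left _ _))⟩

/-- `Ω̲(ω*)`: `Ω(ω*)` with a new least element (`none`) adjoined. -/
abbrev OmegaStarBot : Type := Option OmegaStar

/-- The join in `Ω̲(ω*)`. -/
def omegaBotJoin : OmegaStarBot → OmegaStarBot → OmegaStarBot
  | none, b => b
  | a, none => a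
  | some a, some b => some (omegaJoin a b)

/-- `I_{<ω}(Q)`: the finitely generated initial segments of `Q`,
i.e. downward closures of finite subsets of `Q` (including `∅`). -/
def FinGenInit (Q : Type*) [Preorder Q] : Set (Set Q) :=
  {S | ∃ F : Finset Q, S = {x | ∃ y ∈ F, x ≤ y}}

/-- An ideal of a poset: a nonempty, up-directed, downward closed subset. -/
def IsIdeal {P : Type*} [Preorder P] (I : Set P) : Prop :=
  I.Nonempty ∧ (∀ x ∈ I, ∀ y ∈ I, ∃ z ∈ I, x ≤ z ∧ y ≤ z) ∧
    ∀ x y : P, x ≤ y → y ∈ I → x ∈ I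

/-- A completely meet-irreducible ideal: an ideal `I` for which there is an ideal `J ⊋ I`
contained in every ideal strictly containing `I`. -/
def CMIdeal {P : Type*} [Preorder P] (I : Set P) : Prop :=
  IsIdeal I ∧ ∃ J : Set P, IsIdeal J ∧ I ⊂ J ∧ ∀ K : Set P, IsIdeal K → I ⊂ K → J ⊆ K

/-- An ideal of a sub-poset `P` of `α`: a subset of `P`, nonempty, up-directed,
downward closed within `P`. -/
def IsIdealIn {α : Type*} [Preorder α] (P I : Set α) : Prop :=
  I ⊆ P ∧ I.Nonempty ∧ (∀ x ∈ I, ∀ y ∈ I, ∃ z ∈ I, x ≤ z ∧ y ≤ z) ∧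
    ∀ x ∈ P, ∀ y ∈ I, x ≤ y → x ∈ I

/-- A completely meet-irreducible ideal of the sub-poset `P`. -/
def CMIdealIn {α : Type*} [Preorder α] (P I : Set α) : Prop :=
  IsIdealIn P I ∧ ∃ J : Set α, IsIdealIn P J ∧ I ⊂ J ∧
    ∀ K : Set α, IsIdealIn P K → I ⊂ K → J ⊆ K

/-- `{x} ∨ J`, the ideal `{z : z ≤ x ⊔ y for some y ∈ J}`. -/
def JoinUp {P : Type*} [SemilatticeSup P] (x : P) (J : Set P) : Set P :=
  {z | ∃ y ∈ J, z ≤ x ⊔ y}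

/-- A nonempty chain `𝓘` of ideals is separating if for every `I ∈ 𝓘` with `I ≠ ⋃𝓘` and every
`x ∈ ⋃𝓘 \ I` there is `J ∈ 𝓘` with `I ⊄ {x} ∨ J`. -/
def Separating {P : Type*} [SemilatticeSup P] (𝓘 : Set (Set P)) : Prop :=
  ∀ I ∈ 𝓘, I ≠ ⋃₀ 𝓘 → ∀ x ∈ (⋃₀ 𝓘) \ I, ∃ J ∈ 𝓘, ¬ I ⊆ JoinUp x J

/-- An independent subset of a join-semilattice: no member is below the join of finitely many
of the others. -/
def IndepSet {P : Type*} [SemilatticeSup P] (X : Set P) : Prop :=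
  ∀ x ∈ X, ∀ F : Finset P, ∀ hF : F.Nonempty, ↑F ⊆ X \ {x} → ¬ x ≤ F.sup' hF id

/-- `ℱ^{<ω}`: unions of finite subfamilies of `ℱ` (including `∅`). -/
def finUnions {α : Type*} (ℱ : Set (Set α)) : Set (Set α) :=
  {S | ∃ G : Finset (Set α), ↑G ⊆ ℱ ∧ S = ⋃₀ ↑G}

/-- `ℱ^∪`: unions of arbitrary subfamilies of `ℱ`. -/
def arbUnions {α : Type*} (ℱ : Set (Set α)) : Set (Set α) :=
  {S | ∃ G ⊆ ℱ, S = ⋃₀ G}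

/-- Auxiliary: there is no infinite strictly descending sequence of finitely generated
initial segments of a well-founded poset. Proved via a rank-counting measure into the
lexicographic order on `Ordinal →₀ ℕ`. -/
theorem no_descending_fg {Q : Type*} [PartialOrder Q]
    (hwf : WellFounded ((· < ·) : Q → Q → Prop)) (G : ℕ → Finset Q)
    (hdec : ∀ n, ({x : Q | ∃ g ∈ G (n+1), x ≤ g}) ⊂ {x : Q | ∃ g ∈ G n, x ≤ g}) : False := by
  classical
  haveI : IsWellFounded Q (· < ·) := ⟨hwf⟩
  set rk : Q → Ordinal := IsWellFounded.rank (α := Q) (· < ·) with hrk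
  have rkmono : ∀ {a b : Q}, a < b → rk a < rk b := fun h => IsWellFounded.rank_lt_of_rel h
  -- maximal elements of the generator sets
  set M : ℕ → Finset Q := fun n => (G n).filter (fun g => ∀ h ∈ G n, ¬ g < h) with hMdef
  have hMsub : ∀ n, M n ⊆ G n := fun n => Finset.filter_subset _ _
  have hMmax : ∀ n, ∀ g ∈ M n, ∀ h ∈ G n, ¬ g < h := by
    intro n g hg
    exact (Finset.mem_filter.1 hg).2
  have hanti : ∀ n, ∀ g ∈ M n, ∀ h ∈ M n, ¬ g < h := by
    intro n g hg h hh
    exact hMmax n g hg h (hMsub n hh)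
  -- every generator is below a maximal generator
  have hup : ∀ n, ∀ g ∈ G n, ∃ m ∈ M n, g ≤ m := by
    intro n g hg
    obtain ⟨b, hgb, hb⟩ := (G n).exists_le_maximal hg
    refine ⟨b, Finset.mem_filter.2 ⟨hb.1, fun h hh hlt => ?_⟩, hgb⟩
    exact (hlt.trans_le (hb.2 hh hlt.le)).false
  -- downsets of M equal downsets of G
  have hM : ∀ n (x : Q), (∃ g ∈ G n, x ≤ g) ↔ (∃ g ∈ M n, x ≤ g) := by
    intro n x
    constructor
    · rintro ⟨g, hg, hxg⟩
      obtain ⟨m, hm, hgm⟩ := hup n g hg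
      exact ⟨m, hm, hxg.trans hgm⟩
    · rintro ⟨g, hg, hxg⟩
      exact ⟨g, hMsub n hg, hxg⟩
  -- the measure
  set ν : Finset Q → (Ordinal →₀ ℕ) := fun A => ∑ g ∈ A, Finsupp.single (rk g) 1 with hνdef
  have hν : ∀ (A : Finset Q) (β : Ordinal), ν A β = (A.filter (fun g => rk g = β)).card := by
    intro A β
    rw [hνdef]
    rw [Finset.sum_apply']
    rw [Finset.card_filter]
    apply Finset.sum_congr rfl
    intro g _
    rw [Finsupp.single_apply]
  -- the lex descent
  have hlex : ∀ n, Finsupp.Lex (· > ·) (· < ·) (ν (M (n+1))) (ν (M n)) := by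
    intro n
    set X : Finset Q := M n \ M (n+1) with hXdef
    set Y : Finset Q := M (n+1) \ M n with hYdef
    set Z : Finset Q := M n ∩ M (n+1) with hZdef
    have hXne : X.Nonempty := by
      rw [Finset.sdiff_nonempty]
      intro hsub
      refine (hdec n).2 ?_
      intro x hx
      obtain ⟨g, hg, hxg⟩ := (hM n x).1 hx
      exact (hM (n+1) x).2 ⟨g, hsub hg, hxg⟩
    have hY : ∀ y ∈ Y, ∃ x ∈ X, y < x := by
      intro y hy
      have hy1 : y ∈ M (n+1) := (Finset.mem_sdiff.1 hy).1
      have hy2 : y ∉ M n := (Finset.mem_sdiff.1 hy).2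
      have : (y : Q) ∈ {x : Q | ∃ g ∈ G n, x ≤ g} := by
        refine (hdec n).1 ?_
        exact ⟨y, hMsub _ hy1, le_refl y⟩
      obtain ⟨x, hx, hyx⟩ := (hM n y).1 this
      have hne : y ≠ x := fun h => hy2 (h ▸ hx)
      have hlt : y < x := lt_of_le_of_ne hyx hne
      refine ⟨x, Finset.mem_sdiff.2 ⟨hx, fun hx1 => ?_⟩, hlt⟩
      exact hanti (n+1) y hy1 x hx1 hlt
    -- beta
    have hXimne : (X.image rk).Nonempty := hXne.image rk
    set β : Ordinal := (X.image rk).max' hXimne with hβ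
    have hβmem : ∃ x ∈ X, rk x = β := by
      have := (X.image rk).max'_mem hXimne
      rw [Finset.mem_image] at this
      exact this
    have hβle : ∀ x ∈ X, rk x ≤ β := fun x hx =>
      (X.image rk).le_max' _ (Finset.mem_image_of_mem rk hx)
    -- decompositions
    have hMn : M n = Z ∪ X := by
      rw [hZdef, hXdef, ← Finset.sup_eq_union, ← Finset.inf_eq_inter, sup_inf_sdiff]
    have hMn1 : M (n+1) = Z ∪ Y := by
      rw [hZdef, hYdef, Finset.inter_comm, ← Finset.sup_eq_union, ← Finset.inf_eq_inter,
        sup_inf_sdiff]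
    have hdisjX : Disjoint Z X := by
      rw [hZdef, hXdef]
      exact Finset.disjoint_sdiff.mono_left Finset.inter_subset_right
    have hdisjY : Disjoint Z Y := by
      rw [hZdef, hYdef]
      exact Finset.disjoint_sdiff.mono_left Finset.inter_subset_left
    have hcard : ∀ (A B : Finset Q) (j : Ordinal), Disjoint A B →
        ((A ∪ B).filter (fun g => rk g = j)).card
          = (A.filter (fun g => rk g = j)).card + (B.filter (fun g => rk g = j)).card := by
      intro A B j hd
      rw [Finset.filter_union]
      exact Finset.card_union_of_disjoint (Finset.disjoint_filter_filter hd)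
    have hYhigh : ∀ j, β ≤ j → (Y.filter (fun g => rk g = j)) = ∅ := by
      intro j hj
      rw [Finset.filter_eq_empty_iff]
      intro y hy hrkj
      obtain ⟨x, hx, hyx⟩ := hY y hy
      exact absurd hrkj (((rkmono hyx).trans_le ((hβle x hx).trans hj)).ne
        )
    have hXhigh : ∀ j, β < j → (X.filter (fun g => rk g = j)) = ∅ := by
      intro j hj
      rw [Finset.filter_eq_empty_iff]
      intro x hx hrkj
      exact absurd hrkj (((hβle x hx).trans_lt hj).ne
        )
    rw [Finsupp.lex_def]
    refine ⟨β, ?_, ?_⟩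
    · intro j hj
      rw [hν, hν, hMn, hMn1, hcard _ _ _ hdisjX, hcard _ _ _ hdisjY,
        hYhigh j (le_of_lt hj), hXhigh j hj]
    · rw [hν, hν, hMn, hMn1, hcard _ _ _ hdisjX, hcard _ _ _ hdisjY, hYhigh β le_rfl]
      simp only [Finset.card_empty, Nat.add_zero]
      have : 0 < (X.filter (fun g => rk g = β)).card := by
        rw [Finset.card_pos]
        obtain ⟨x, hx, hrkx⟩ := hβmem
        exact ⟨x, Finset.mem_filter.2 ⟨hx, hrkx⟩⟩
      omega
  -- well-foundedness of the lex order
  have hw : WellFounded (Finsupp.Lex ((· > ·) : Ordinal → Ordinal → Prop)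
      ((· < ·) : ℕ → ℕ → Prop)) := by
    refine Finsupp.Lex.wellFounded (fun n h => Nat.not_lt_zero n h) (Nat.lt_wfRel.wf) ?_
    refine Subrelation.wf (h₂ := Ordinal.lt_wf) ?_
    intro a b h
    obtain ⟨h1, h2⟩ := h
    exact lt_of_le_of_ne (le_of_not_gt h1) h2
  -- conclude
  have key : ∀ z : Ordinal →₀ ℕ, ∀ n, ν (M n) ≠ z := by
    intro z
    induction z using hw.induction with
    | _ z IH =>
      intro n hzn
      exact IH (ν (M (n+1))) (hzn ▸ hlex n) (n+1) rfl
  exact key (ν (M 0)) 0 rfl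

/-- Part 1 of the main theorem. -/
theorem main_part1 (Q : Type) [PartialOrder Q]
    (hwf : WellFounded ((· < ·) : Q → Q → Prop)) :
    ¬ ∃ f : OmegaStarBot → Set Q, (∀ a, f a ∈ FinGenInit Q) ∧ Function.Injective f ∧
        ∀ a b, f (omegaBotJoin a b) = f a ∪ f b := by
  classical
  rintro ⟨f, hmem, hinj, hjoin⟩
  -- the basic sequence of sets
  set p : ∀ i j, i < j → OmegaStar := fun i j h => ⟨(i, j), h⟩ with hp
  set D : ℕ → Set Q := fun n => f (some (p n (n+1) (Nat.lt_succ_self n))) with hD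
  -- `f` on general pairs
  have hS : ∀ i m (him : i ≤ m), f (some (p i (m+1) (by omega))) = D i ∪ D m := by
    intro i m him
    have := hjoin (some (p i (i+1) (by omega))) (some (p m (m+1) (by omega)))
    have hj : omegaBotJoin (some (p i (i+1) (by omega))) (some (p m (m+1) (by omega)))
        = some (p i (m+1) (by omega)) := by
      show some (omegaJoin _ _) = _
      congr 1
      apply Subtype.ext
      show (min i m, max (i+1) (m+1)) = (i, m+1)
      have h1 : min i m = i := min_eq_left him
      have h2 : max (i+1) (m+1) = m+1 := max_eq_right (by omega)
      rw [h1, h2]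
    rw [hj] at this
    exact this
  -- interval condition
  have hint : ∀ i k m, i ≤ k → k ≤ m → D k ⊆ D i ∪ D m := by
    intro i k m hik hkm
    have him : i ≤ m := hik.trans hkm
    have := hjoin (some (p k (k+1) (by omega))) (some (p i (m+1) (by omega)))
    have hj : omegaBotJoin (some (p k (k+1) (by omega))) (some (p i (m+1) (by omega)))
        = some (p i (m+1) (by omega)) := by
      show some (omegaJoin _ _) = _
      congr 1
      apply Subtype.ext
      show (min k i, max (k+1) (m+1)) = (i, m+1)
      have h1 : min k i = i := min_eq_right hik
      have h2 : max (k+1) (m+1) = m+1 := max_eq_right (by omega)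
      rw [h1, h2]
    rw [hj] at this
    have : D i ∪ D m = D k ∪ (D i ∪ D m) := by
      rw [hS i m him] at this
      exact this
    intro x hx
    rw [this]
    exact Or.inl hx
  -- injectivity of the pair map
  have hinj2 : ∀ i m i' m', i ≤ m → i' ≤ m' → D i ∪ D m = D i' ∪ D m' → i = i' ∧ m = m' := by
    intro i m i' m' him him' heq
    rw [← hS i m him, ← hS i' m' him'] at heq
    have := hinj heq
    have := Option.some_injective _ this
    have h2 : (p i (m+1) (by omega) : OmegaStar).1 = (p i' (m'+1) (by omega) : OmegaStar).1 :=
      congrArg _ this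
    rw [hp] at h2
    simp only [Prod.mk.injEq] at h2
    omega
  -- down-closedness and generators
  have hFG : ∀ n, ∃ F : Finset Q, D n = {x | ∃ y ∈ F, x ≤ y} := fun n => hmem _
  choose F hF using hFG
  have Ddc : ∀ n, ∀ x y : Q, x ≤ y → y ∈ D n → x ∈ D n := by
    intro n x y hxy hy
    rw [hF n] at hy ⊢
    obtain ⟨g, hg, hyg⟩ := hy
    exact ⟨g, hg, hxy.trans hyg⟩
  have hFD : ∀ n, ∀ g ∈ F n, g ∈ D n := by
    intro n g hg
    rw [hF n]
    exact ⟨g, hg, le_refl g⟩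
  -- the liminf ideal
  set L : Set Q := {x | ∃ N, ∀ m, N ≤ m → x ∈ D m} with hL
  have Ldc : ∀ x y : Q, x ≤ y → y ∈ L → x ∈ L := by
    rintro x y hxy ⟨N, hN⟩
    exact ⟨N, fun m hm => Ddc m x y hxy (hN m hm)⟩
  -- construction of the witnesses x_k
  have hxex : ∀ k, ∃ g, g ∈ F k ∧ g ∉ L ∧ g ∉ D (k+1) := by
    intro k
    -- for every m ≥ k+1 there is a generator of `D k` outside `D (k+1) ∪ D m`
    have step : ∀ m, k+1 ≤ m → ∃ g, g ∈ F k ∧ g ∉ D (k+1) ∧ g ∉ D m := by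
      intro m hm
      have hsub : D (k+1) ∪ D m ⊆ D k ∪ D m := by
        intro x hx
        rcases hx with hx | hx
        · exact hint k (k+1) m (by omega) hm hx
        · exact Or.inr hx
      have hne : D (k+1) ∪ D m ≠ D k ∪ D m := by
        intro h
        have := hinj2 (k+1) m k m hm (by omega) h
        omega
      obtain ⟨y, hy, hyn⟩ := exists_of_ssubset (ssubset_of_subset_of_ne hsub hne)
      have hynk1 : y ∉ D (k+1) := fun h => hyn (Or.inl h)
      have hynm : y ∉ D m := fun h => hyn (Or.inr h)
      have hyk : y ∈ D k := by
        rcases hy with hy | hy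
        · exact hy
        · exact absurd hy hynm
      rw [hF k] at hyk
      obtain ⟨g, hg, hyg⟩ := hyk
      refine ⟨g, hg, fun h => hynk1 (Ddc _ _ _ hyg h), fun h => hynm (Ddc _ _ _ hyg h)⟩
    have hFne : (F k).Nonempty := by
      obtain ⟨g, hg, _, _⟩ := step (k+1) (by omega)
      exact ⟨g, hg⟩
    choose c hc1 hc2 hc3 using fun m : ℕ => step (m + (k+1)) (by omega)
    set c' : ℕ → {g // g ∈ F k} := fun m => ⟨c m, hc1 m⟩ with hc'
    obtain ⟨⟨g, hgF⟩, hfib⟩ := Finite.exists_infinite_fiber c'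
    have hfib' : {m | c' m = ⟨g, hgF⟩}.Infinite := by
      rw [← Set.infinite_coe_iff]
      exact hfib
    obtain ⟨m₀, hm₀, _⟩ := hfib'.exists_gt 0
    have hgm₀ : c m₀ = g := congrArg Subtype.val hm₀
    refine ⟨g, hgF, ?_, hgm₀ ▸ hc2 m₀⟩
    rintro ⟨N, hN⟩
    obtain ⟨m₁, hm₁, hm₁N⟩ := hfib'.exists_gt N
    have hgm₁ : c m₁ = g := congrArg Subtype.val hm₁
    have : g ∈ D (m₁ + (k+1)) := hN _ (by omega)
    exact (hgm₁ ▸ hc3 m₁) this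
  choose x hxF hxL hxD1 using hxex
  have hxD : ∀ k, x k ∈ D k := fun k => hFD k (x k) (hxF k)
  -- level drop: elements outside L that are in `D k` are in all earlier `D j`
  have hdrop : ∀ g, g ∉ L → ∀ j k, j ≤ k → g ∈ D k → g ∈ D j := by
    intro g hgL j k hjk hgk
    rw [hL] at hgL
    simp only [Set.mem_setOf_eq] at hgL
    push_neg at hgL
    obtain ⟨m, hm, hgm⟩ := hgL k
    rcases hint j k m hjk hm hgk with h | h
    · exact h
    · exact absurd h hgm
  -- the strictly decreasing finitely generated downsets
  set G : ℕ → Finset Q := fun n => (F n).filter (fun g => g ∉ L) with hG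
  have hGm : ∀ n g, g ∈ G n ↔ g ∈ F n ∧ g ∉ L := by
    intro n g
    rw [hG]
    exact Finset.mem_filter
  refine no_descending_fg hwf G ?_
  intro n
  constructor
  · -- `Ê (n+1) ⊆ Ê n`
    rintro z ⟨g, hg, hzg⟩
    obtain ⟨hgF', hgL⟩ := (hGm (n+1) g).1 hg
    have hgDn1 : g ∈ D (n+1) := hFD _ _ hgF'
    have hgDn : g ∈ D n := hdrop g hgL n (n+1) (by omega) hgDn1
    rw [hF n] at hgDn
    obtain ⟨h, hhF, hgh⟩ := hgDn
    have hhL : h ∉ L := fun hL' => hgL (Ldc g h hgh hL')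
    exact ⟨h, (hGm n h).2 ⟨hhF, hhL⟩, hzg.trans hgh⟩
  · -- not the other inclusion: `x n` is a witness
    intro hsub
    have hxin : x n ∈ {z : Q | ∃ g ∈ G n, z ≤ g} :=
      ⟨x n, (hGm n (x n)).2 ⟨hxF n, hxL n⟩, le_refl _⟩
    obtain ⟨g, hg, hxg⟩ := hsub hxin
    obtain ⟨hgF', _⟩ := (hGm (n+1) g).1 hg
    exact hxD1 n (Ddc (n+1) (x n) g hxg (hFD _ _ hgF'))

/-- `ℕ` as a discrete poset (an antichain). -/
def DiscNat : Type := ℕ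

instance : PartialOrder DiscNat where
  le a b := a = b
  le_refl _ := rfl
  le_trans a b c h1 h2 := by
    have h1' : a = b := h1
    have h2' : b = c := h2
    exact h1'.trans h2'
  le_antisymm _ _ h _ := h

theorem DiscNat.le_iff {a b : DiscNat} : a ≤ b ↔ a = b := ⟨fun h => h, fun h => h⟩

theorem DiscNat.wf : WellFounded ((· < ·) : DiscNat → DiscNat → Prop) := by
  constructor
  intro a
  constructor
  intro b hb
  have h1 : (b : DiscNat) = a := (lt_iff_le_not_ge.1 hb).1
  exact ((lt_iff_le_not_ge.1 hb).2 (show a = b from h1.symm)).elim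

def toDN : ℕ → DiscNat := id
def ofDN : DiscNat → ℕ := id

theorem part2_reduction
    (main1 : ∀ (Q : Type) [PartialOrder Q], WellFounded ((· < ·) : Q → Q → Prop) →
      ¬ ∃ f : OmegaStarBot → Set Q, (∀ a, f a ∈ FinGenInit Q) ∧ Function.Injective f ∧
          ∀ a b, f (omegaBotJoin a b) = f a ∪ f b) :
    ¬ ∃ f : OmegaStarBot → Finset ℕ, Function.Injective f ∧
        ∀ a b, f (omegaBotJoin a b) = f a ∪ f b := by
  rintro ⟨f, hinj, hjoin⟩
  refine main1 DiscNat DiscNat.wf ⟨fun a => {x : DiscNat | ofDN x ∈ f a}, ?_, ?_, ?_⟩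
  · intro a
    refine ⟨(f a).map ⟨toDN, fun _ _ h => h⟩, ?_⟩
    ext x
    simp only [Set.mem_setOf_eq, Finset.mem_map, Function.Embedding.coeFn_mk]
    constructor
    · intro h
      exact ⟨x, ⟨ofDN x, h, rfl⟩, le_refl x⟩
    · rintro ⟨y, ⟨b, hb, rfl⟩, hyx⟩
      rw [DiscNat.le_iff] at hyx
      subst hyx
      exact hb
  · intro a b h
    apply hinj
    ext n
    have := Set.ext_iff.1 h (toDN n)
    exact this
  · intro a b
    ext x
    simp only [Set.mem_setOf_eq, hjoin a b, Finset.mem_union, Set.mem_union]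

/-- For a well-founded poset `Q`, `Ω̲(ω*)` does not embed into `I_{<ω}(Q)` as a
join-subsemilattice; in particular (taking `Q = ℕ` as an antichain) it does not embed into
`[ω]^{<ω}` as a join-subsemilattice. -/
theorem omegaBot_not_embeds_finGenInit :
    (∀ (Q : Type) [PartialOrder Q], WellFounded ((· < ·) : Q → Q → Prop) →
      ¬ ∃ f : OmegaStarBot → Set Q, (∀ a, f a ∈ FinGenInit Q) ∧ Function.Injective f ∧
          ∀ a b, f (omegaBotJoin a b) = f a ∪ f b) ∧
    ¬ ∃ f : OmegaStarBot → Finset ℕ, Function.Injective f ∧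
        ∀ a b, f (omegaBotJoin a b) = f a ∪ f b := by
  refine ⟨fun Q _ hwf => main_part1 Q hwf, part2_reduction (fun Q _ hwf => main_part1 Q hwf)⟩
end

section
/- Let L be an algebraic lattice (a complete lattice in which every element is a join of compact elements). Then L is well-founded if and only if the join-semilattice K(L) of compact elements of L is well-founded and neither Ω̲(ω*) nor [ω]^{<ω} embeds into K(L) as a join-subsemilattice. -/
open Set

namespace CPProof

abbrev Cpt {L : Type*} [CompleteLattice L] (c : L) : Prop :=
  IsCompactElement c

variable {L : Type*} [CompleteLattice L]

lemma cpt_bot : Cpt (⊥ : L) := fun _ _ hs _ _ _ => ⟨hs.some, hs.some_mem, bot_le⟩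

lemma cpt_finsetSup {ι : Type*} (F : Finset ι) (f : ι → L) (h : ∀ i ∈ F, Cpt (f i)) :
    Cpt (F.sup f) :=
  CompleteLattice.isCompactElement_finsetSup F h

lemma cpt_sup {a b : L} (ha : Cpt a) (hb : Cpt b) : Cpt (a ⊔ b) := by
  classical
  have := cpt_finsetSup ({a, b} : Finset L) id (by
    intro i hi
    rcases Finset.mem_insert.mp hi with h | h
    · subst h; exact ha
    · rw [Finset.mem_singleton.mp h]; exact hb)
  simpa using this

/-- generic iterator -/
def pIter {α : Type*} (g : α → α) (a0 : α) : ℕ → α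
  | 0 => a0
  | k + 1 => g (pIter g a0 k)

lemma pIter_zero {α : Type*} (g : α → α) (a0 : α) : pIter g a0 0 = a0 := rfl
lemma pIter_succ {α : Type*} (g : α → α) (a0 : α) (k : ℕ) :
    pIter g a0 (k + 1) = g (pIter g a0 k) := rfl

/-- history recursion -/
def histA (W : ℕ → L) (bd : ℕ → (ℕ → L) → L) : ℕ → ℕ → L
  | 0 => fun _ => ⊥
  | m + 1 => fun i => if i = m then W m ⊔ bd m (histA W bd m) else histA W bd m i

def aseq (W : ℕ → L) (bd : ℕ → (ℕ → L) → L) (m : ℕ) : L := W m ⊔ bd m (histA W bd m)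

lemma histA_eq (W : ℕ → L) (bd : ℕ → (ℕ → L) → L) :
    ∀ m i, i < m → histA W bd m i = aseq W bd i := by
  intro m
  induction m with
  | zero => intro i hi; omega
  | succ m ih =>
    intro i hi
    by_cases h : i = m
    · subst h
      show (if i = i then W i ⊔ bd i (histA W bd i) else histA W bd i i) = aseq W bd i
      rw [if_pos rfl]; rfl
    · have hi' : i < m := by omega
      show (if i = m then _ else histA W bd m i) = aseq W bd i
      rw [if_neg h]; exact ih i hi'

open Classical in
noncomputable def pickY (P : L → Prop) (u v : L) : L :=
  if h : ∃ y, P y ∧ v ≤ u ⊔ y then h.choose else ⊥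

open Classical in
lemma pickY_prop {P : L → Prop} (hP : P ⊥) (u v : L) : P (pickY P u v) := by
  unfold pickY
  split
  · next h => exact h.choose_spec.1
  · exact hP

open Classical in
lemma pickY_le {P : L → Prop} {u v : L} (h : ∃ y, P y ∧ v ≤ u ⊔ y) :
    v ≤ u ⊔ pickY P u v := by
  unfold pickY
  rw [dif_pos h]
  exact h.choose_spec.2

/-- bundled properties of the basic sequence -/
structure GSeq (x : ℕ → L) (a : ℕ → L) (ν : ℕ → ℕ) : Prop where
  mono : StrictMono ν
  cpt : ∀ m, Cpt (a m)
  le : ∀ m, a m ≤ x (ν m)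
  notle : ∀ m, ¬ a m ≤ x (ν (m + 1))
  absorb : ∀ i j m, i < j → j < m → a j ≤ a i ⊔ a m

variable {x : ℕ → L}

lemma GSeq.comp (hxa : ∀ p q, p ≤ q → x q ≤ x p) {a : ℕ → L} {ν : ℕ → ℕ}
    (hG : GSeq x a ν) {ρ : ℕ → ℕ} (hρ : StrictMono ρ) : GSeq x (a ∘ ρ) (ν ∘ ρ) := by
  refine ⟨hG.mono.comp hρ, fun m => hG.cpt _, fun m => hG.le _, ?_, ?_⟩
  · intro m hle
    have h1 : ρ m + 1 ≤ ρ (m + 1) := hρ (Nat.lt_succ_self m)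
    have h2 : x ((ν ∘ ρ) (m + 1)) ≤ x (ν (ρ m + 1)) := hxa _ _ (hG.mono.le_iff_le.mpr h1)
    exact hG.notle (ρ m) (hle.trans h2)
  · intro i j m hij hjm
    exact hG.absorb _ _ _ (hρ hij) (hρ hjm)

lemma GSeq.notle_sup (hxa : ∀ p q, p ≤ q → x q ≤ x p) {a : ℕ → L} {ν : ℕ → ℕ}
    (hG : GSeq x a ν) (i : ℕ) (F : Finset ℕ) (hF : ∀ k ∈ F, i < k) :
    ¬ a i ≤ F.sup a := by
  intro hle
  apply hG.notle i
  refine hle.trans (Finset.sup_le fun k hk => ?_)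
  exact (hG.le k).trans (hxa _ _ (hG.mono.le_iff_le.mpr (hF k hk)))

lemma GSeq.notle_two (hxa : ∀ p q, p ≤ q → x q ≤ x p) {a : ℕ → L} {ν : ℕ → ℕ}
    (hG : GSeq x a ν) {i j j' : ℕ} (h1 : i < j) (h2 : i < j') :
    ¬ a i ≤ a j ⊔ a j' := by
  classical
  intro hle
  apply GSeq.notle_sup hxa hG i ({j, j'} : Finset ℕ)
  · intro k hk
    rcases Finset.mem_insert.mp hk with h | h
    · subst h; exact h1
    · rw [Finset.mem_singleton.mp h]; exact h2
  · refine hle.trans ?_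
    have hj : a j ≤ ({j, j'} : Finset ℕ).sup a := Finset.le_sup (by simp)
    have hj' : a j' ≤ ({j, j'} : Finset ℕ).sup a := Finset.le_sup (by simp)
    exact sup_le hj hj'

lemma GSeq.ne (hxa : ∀ p q, p ≤ q → x q ≤ x p) {a : ℕ → L} {ν : ℕ → ℕ}
    (hG : GSeq x a ν) {p m : ℕ} (hpm : p < m) : a p ≠ a m := by
  intro h
  apply hG.notle p
  rw [h]
  exact (hG.le m).trans (hxa _ _ (hG.mono.le_iff_le.mpr hpm))


lemma nofat {b : ℕ → L}
    (hnf : ∀ s t : ℕ, s < t → {u : ℕ | t < u ∧ b u ≤ b s ⊔ b t}.Finite) :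
    ∃ u : ℕ → ℕ, StrictMono u ∧
      ∀ p q m, p < q → q < m → ¬ b (u m) ≤ b (u p) ⊔ b (u q) := by
  classical
  have hB : ∀ s t : ℕ, ∃ B, ∀ v, s < t → t < v → b v ≤ b s ⊔ b t → v ≤ B := by
    intro s t
    by_cases h : s < t
    · obtain ⟨B, hBm⟩ := (hnf s t h).bddAbove
      exact ⟨B, fun v _ h1 h2 => hBm ⟨h1, h2⟩⟩
    · exact ⟨0, fun v hst => absurd hst h⟩
  choose Bf hBf using hB
  set M : ℕ → ℕ := fun k =>
    ((Finset.range (k + 1)) ×ˢ (Finset.range (k + 1))).sup (fun p => Bf p.1 p.2) with hM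
  set u : ℕ → ℕ := pIter (fun t => max (t + 1) (M t + 1)) 0 with hu
  have husucc : ∀ k, u (k + 1) = max (u k + 1) (M (u k) + 1) := fun k => rfl
  have humono : StrictMono u := by
    apply strictMono_nat_of_lt_succ
    intro k
    rw [husucc]
    omega
  refine ⟨u, humono, ?_⟩
  intro p q m hpq hqm hle
  have h1 : u p < u q := humono hpq
  have h2 : u q < u m := humono hqm
  have h3 : u m ≤ Bf (u p) (u q) := hBf (u p) (u q) (u m) h1 h2 hle
  have h4 : Bf (u p) (u q) ≤ M (u q) := by
    rw [hM]
    exact Finset.le_sup (f := fun p : ℕ × ℕ => Bf p.1 p.2) (b := (u p, u q))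
      (by simp only [Finset.mem_product, Finset.mem_range]; omega)
  have h5 : M (u q) + 1 ≤ u (q + 1) := by rw [husucc]; omega
  have h6 : u (q + 1) ≤ u m := humono.monotone (by omega)
  omega

lemma fat_step {b : ℕ → L} {ν : ℕ → ℕ} (hG : GSeq x b ν) {e : ℕ → ℕ}
    (he : StrictMono e) {s t : ℕ} (hst : s < t)
    (hinf : {u : ℕ | t < u ∧ b (e u) ≤ b (e s) ⊔ b (e t)}.Infinite) :
    ∃ w : ℕ → ℕ, StrictMono w ∧ (∀ i, t < w i) ∧
      (∀ i, b (e (w i)) ≤ b (e s) ⊔ b (e t)) ∧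
      (∀ i, b (e s) ⊔ b (e (w i)) = b (e s) ⊔ b (e t)) := by
  classical
  have hex : ∀ n : ℕ, ∃ v ∈ {u : ℕ | t < u ∧ b (e u) ≤ b (e s) ⊔ b (e t)}, n < v :=
    fun n => hinf.exists_gt n
  choose g hg1 hg2 using hex
  set w : ℕ → ℕ := pIter g (g 0) with hw
  have hwmem : ∀ i, w i ∈ {u : ℕ | t < u ∧ b (e u) ≤ b (e s) ⊔ b (e t)} := by
    intro i
    induction i with
    | zero => exact hg1 0
    | succ i _ => exact hg1 (w i)
  have hwmono : StrictMono w := by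
    apply strictMono_nat_of_lt_succ
    intro k
    exact hg2 (w k)
  refine ⟨w, hwmono, fun i => (hwmem i).1, fun i => (hwmem i).2, fun i => ?_⟩
  apply le_antisymm
  · exact sup_le le_sup_left (hwmem i).2
  · refine sup_le le_sup_left ?_
    exact hG.absorb (e s) (e t) (e (w i)) (he hst) (he (hwmem i).1)

lemma diag (hK : WellFounded (fun a b : {c : L // Cpt c} => a < b))
    (hxa : ∀ p q, p ≤ q → x q ≤ x p) {b : ℕ → L} {ν : ℕ → ℕ} (hG : GSeq x b ν) :
    ∀ c : {c : L // Cpt c}, ∀ e : ℕ → ℕ, StrictMono e → (∀ i, b (e i) ≤ c.1) →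
      (∃ p, (∀ i, p < e i) ∧ (∀ i, b p ⊔ b (e i) = c.1)) →
      ∃ ρ : ℕ → ℕ, StrictMono ρ ∧
        ∀ p q m, p < q → q < m → ¬ b (ρ m) ≤ b (ρ p) ⊔ b (ρ q) := by
  intro c
  refine WellFounded.induction hK (C := fun c => ∀ e : ℕ → ℕ, StrictMono e →
    (∀ i, b (e i) ≤ c.1) → (∃ p, (∀ i, p < e i) ∧ (∀ i, b p ⊔ b (e i) = c.1)) →
    ∃ ρ : ℕ → ℕ, StrictMono ρ ∧
      ∀ p q m, p < q → q < m → ¬ b (ρ m) ≤ b (ρ p) ⊔ b (ρ q)) c ?_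
  clear c
  intro c IH e he hbd hinv
  by_cases hfat : ∃ s t : ℕ, s < t ∧ {u : ℕ | t < u ∧ b (e u) ≤ b (e s) ⊔ b (e t)}.Infinite
  · obtain ⟨s, t, hst, hinf⟩ := hfat
    obtain ⟨w, hwmono, hwt, hwle, hwconst⟩ := fat_step hG he hst hinf
    set c' : {c : L // Cpt c} := ⟨b (e s) ⊔ b (e t), cpt_sup (hG.cpt _) (hG.cpt _)⟩ with hc'
    have hlt : c' < c := by
      obtain ⟨p0, hp1, hp2⟩ := hinv
      have hle : c'.1 ≤ c.1 := sup_le (hbd s) (hbd t)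
      have hne : c'.1 ≠ c.1 := by
        intro heq
        have hb0 : b p0 ≤ c.1 := by
          rw [← hp2 0]; exact le_sup_left
        rw [← heq] at hb0
        exact GSeq.notle_two hxa hG (hp1 s) (hp1 t) hb0
      exact Subtype.coe_lt_coe.mp (lt_of_le_of_ne hle hne)
    refine IH c' hlt (e ∘ w) (he.comp hwmono) (fun i => hwle i) ?_
    exact ⟨e s, fun i => he (hst.trans (hwt i)), fun i => hwconst i⟩
  · push_neg at hfat
    have hnf : ∀ s t : ℕ, s < t →
        {u : ℕ | t < u ∧ (b ∘ e) u ≤ (b ∘ e) s ⊔ (b ∘ e) t}.Finite := by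
      intro s t h
      exact hfat s t h
    obtain ⟨u, hu, hprop⟩ := nofat hnf
    exact ⟨e ∘ u, he.comp hu, fun p q m h1 h2 => hprop p q m h1 h2⟩

lemma diag_outer (hK : WellFounded (fun a b : {c : L // Cpt c} => a < b))
    (hxa : ∀ p q, p ≤ q → x q ≤ x p) {b : ℕ → L} {ν : ℕ → ℕ} (hG : GSeq x b ν) :
    ∃ ρ : ℕ → ℕ, StrictMono ρ ∧
      ∀ p q m, p < q → q < m → ¬ b (ρ m) ≤ b (ρ p) ⊔ b (ρ q) := by
  by_cases hfat : ∃ s t : ℕ, s < t ∧ {u : ℕ | t < u ∧ b u ≤ b s ⊔ b t}.Infinite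
  · obtain ⟨s, t, hst, hinf⟩ := hfat
    obtain ⟨w, hwmono, hwt, hwle, hwconst⟩ := fat_step hG strictMono_id hst hinf
    exact diag hK hxa hG ⟨b s ⊔ b t, cpt_sup (hG.cpt _) (hG.cpt _)⟩ w hwmono
      (fun i => hwle i) ⟨s, fun i => hst.trans (hwt i), fun i => hwconst i⟩
  · push_neg at hfat
    have hnf : ∀ s t : ℕ, s < t → {u : ℕ | t < u ∧ b u ≤ b s ⊔ b t}.Finite := by
      intro s t h
      exact hfat s t h
    exact nofat hnf


def SepF (x : ℕ → L) (N : ℕ) : Prop :=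
  ∀ s : L, Cpt s → s ≤ x N → ∀ n, N ≤ n → ¬ s ≤ x n →
    ∃ z m, Cpt z ∧ z ≤ x n ∧ ∀ y, Cpt y → y ≤ x m → ¬ z ≤ s ⊔ y

lemma caseA (hxa : ∀ p q, p ≤ q → x q ≤ x p)
    (hstrict : ∀ n, ∃ c : L, Cpt c ∧ c ≤ x n ∧ ¬ c ≤ x (n + 1))
    {N : ℕ} (hsep : SepF x N) :
    ∃ f : Finset ℕ → L, (∀ a, Cpt (f a)) ∧ Function.Injective f ∧
      ∀ a b, f (a ∪ b) = f a ⊔ f b := by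
  classical
  have hstep : ∀ p : L × ℕ, ∃ q : L × ℕ,
      (Cpt p.1 ∧ p.1 ≤ x N ∧ N ≤ p.2 ∧ ¬ p.1 ≤ x p.2) →
        (Cpt q.1 ∧ q.1 ≤ x p.2 ∧ ∀ y, Cpt y → y ≤ x q.2 → ¬ q.1 ≤ p.1 ⊔ y) := by
    intro p
    by_cases h : Cpt p.1 ∧ p.1 ≤ x N ∧ N ≤ p.2 ∧ ¬ p.1 ≤ x p.2
    · obtain ⟨z, m, hz1, hz2, hz3⟩ := hsep p.1 h.1 h.2.1 p.2 h.2.2.1 h.2.2.2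
      exact ⟨(z, m), fun _ => ⟨hz1, hz2, hz3⟩⟩
    · exact ⟨(⊥, 0), fun hc => absurd hc h⟩
  choose stp hstp using hstep
  obtain ⟨c0, hc0c, hc0le, hc0n⟩ := hstrict N
  set F : L × ℕ → L × ℕ := fun p => (p.1 ⊔ (stp p).1, max (stp p).2 (p.2 + 1)) with hF
  set st : ℕ → L × ℕ := pIter F (c0, N + 1) with hst
  set s : ℕ → L := fun k => (st k).1 with hs
  set ℓ : ℕ → ℕ := fun k => (st k).2 with hℓ
  set z : ℕ → L := fun k => (stp (st k)).1 with hz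
  have hsucc1 : ∀ k, s (k + 1) = s k ⊔ z k := fun k => rfl
  have hsucc2 : ∀ k, ℓ (k + 1) = max (stp (st k)).2 (ℓ k + 1) := fun k => rfl
  have hV : ∀ k, Cpt (s k) ∧ s k ≤ x N ∧ N ≤ ℓ k ∧ ¬ s k ≤ x (ℓ k) := by
    intro k
    induction k with
    | zero =>
      refine ⟨hc0c, hc0le, Nat.le_succ N, hc0n⟩
    | succ k ih =>
      have hgood := hstp (st k) ⟨ih.1, ih.2.1, ih.2.2.1, ih.2.2.2⟩
      have hzc : Cpt (z k) := hgood.1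
      have hzle : z k ≤ x (ℓ k) := hgood.2.1
      have hznot : ¬ z k ≤ x (stp (st k)).2 := by
        intro h
        exact hgood.2.2 (z k) hzc h le_sup_right
      refine ⟨cpt_sup ih.1 hzc, sup_le ih.2.1 (hzle.trans (hxa _ _ ih.2.2.1)), ?_, ?_⟩
      · rw [hsucc2]; omega
      · intro h
        apply hznot
        have h1 : z k ≤ s (k + 1) := by rw [hsucc1]; exact le_sup_right
        have h2 : x (ℓ (k + 1)) ≤ x (stp (st k)).2 := by
          apply hxa
          rw [hsucc2]
          exact le_max_left _ _
        exact (h1.trans h).trans h2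
  have hgood : ∀ k, Cpt (z k) ∧ z k ≤ x (ℓ k) ∧
      ∀ y, Cpt y → y ≤ x (ℓ (k + 1)) → ¬ z k ≤ s k ⊔ y := by
    intro k
    have h := hstp (st k) ⟨(hV k).1, (hV k).2.1, (hV k).2.2.1, (hV k).2.2.2⟩
    refine ⟨h.1, h.2.1, fun y hy1 hy2 => h.2.2 y hy1 ?_⟩
    refine hy2.trans (hxa _ _ ?_)
    rw [hsucc2]
    exact le_max_left _ _
  have hℓmono : StrictMono ℓ := by
    apply strictMono_nat_of_lt_succ
    intro k
    rw [hsucc2]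
    omega
  have hsmono : Monotone s := by
    apply monotone_nat_of_le_succ
    intro k
    rw [hsucc1]
    exact le_sup_left
  have hzs : ∀ i k, i < k → z i ≤ s k := by
    intro i k hik
    have h1 : z i ≤ s (i + 1) := by rw [hsucc1]; exact le_sup_right
    exact h1.trans (hsmono hik)
  have hindep : ∀ k (G : Finset ℕ), k ∉ G → ¬ z k ≤ G.sup z := by
    intro k G hkG hle
    set y : L := (G.filter (fun j => k < j)).sup z with hy
    have hyc : Cpt y := cpt_finsetSup _ _ (fun j _ => (hgood j).1)
    have hyle : y ≤ x (ℓ (k + 1)) := by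
      apply Finset.sup_le
      intro j hj
      have hkj : k < j := (Finset.mem_filter.mp hj).2
      exact ((hgood j).2.1).trans (hxa _ _ (hℓmono.le_iff_le.mpr hkj))
    have hsupG : G.sup z ≤ s k ⊔ y := by
      apply Finset.sup_le
      intro j hj
      rcases lt_or_gt_of_ne (fun h : j = k => hkG (h ▸ hj)) with h | h
      · exact le_sup_of_le_left (hzs j k h)
      · exact le_sup_of_le_right (Finset.le_sup (Finset.mem_filter.mpr ⟨hj, h⟩))
    exact (hgood k).2.2 y hyc hyle (hle.trans hsupG)
  refine ⟨fun G => G.sup z, fun G => cpt_finsetSup _ _ (fun j _ => (hgood j).1), ?_, ?_⟩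
  · intro G1 G2 heq
    by_contra hne
    have : ∃ k, (k ∈ G1 ∧ k ∉ G2) ∨ (k ∈ G2 ∧ k ∉ G1) := by
      by_contra hno
      push_neg at hno
      apply hne
      ext k
      constructor
      · intro h; exact (hno k).1 h
      · intro h; exact (hno k).2 h
    obtain ⟨k, ⟨h1, h2⟩ | ⟨h1, h2⟩⟩ := this
    · have heq' : G1.sup z = G2.sup z := heq
      exact hindep k G2 h2 (heq' ▸ Finset.le_sup h1)
    · have heq' : G1.sup z = G2.sup z := heq
      exact hindep k G1 h2 (heq'.symm ▸ Finset.le_sup h1)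
  · intro G1 G2
    exact Finset.sup_union

lemma caseB (hxa : ∀ p q, p ≤ q → x q ≤ x p) (hns : ∀ N, ¬ SepF x N) :
    ∃ (a : ℕ → L) (ν : ℕ → ℕ), GSeq x a ν := by
  classical
  have h1 : ∀ N, ∃ s n, Cpt s ∧ s ≤ x N ∧ N ≤ n ∧ ¬ s ≤ x n ∧
      ∀ z, Cpt z → z ≤ x n → ∀ m, ∃ y, Cpt y ∧ y ≤ x m ∧ z ≤ s ⊔ y := by
    intro N
    by_contra hcon
    push_neg at hcon
    apply hns N
    intro s hsc hsle n hNn hsn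
    obtain ⟨z, hzc, hzle, m, hm⟩ := hcon s n hsc hsle hNn hsn
    exact ⟨z, m, hzc, hzle, hm⟩
  choose S Nn hSc hSle hNge hNnot hJ using h1
  set ν : ℕ → ℕ := pIter Nn 0 with hν
  have hνsucc : ∀ m, ν (m + 1) = Nn (ν m) := fun m => rfl
  have hνmono : StrictMono ν := by
    apply strictMono_nat_of_lt_succ
    intro m
    rw [hνsucc]
    rcases lt_or_eq_of_le (hNge (ν m)) with h | h
    · exact h
    · exfalso; exact hNnot (ν m) (h ▸ hSle (ν m))
  set W : ℕ → L := fun m => S (ν m) with hW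
  set pk : ℕ → L → L → L := fun m u v => pickY (fun y => Cpt y ∧ y ≤ x (ν m)) u v with hpk
  set bd : ℕ → (ℕ → L) → L := fun m g =>
    (Finset.range m).sup (fun j => (Finset.range j).sup (fun i => pk m (g i) (g j))) with hbd
  set a : ℕ → L := aseq W bd with ha
  have haeq : ∀ m, a m = W m ⊔ bd m (histA W bd m) := fun m => rfl
  have hpkgood : ∀ m u v, Cpt (pk m u v) ∧ pk m u v ≤ x (ν m) := by
    intro m u v
    exact pickY_prop (P := fun y => Cpt y ∧ y ≤ x (ν m)) ⟨cpt_bot, bot_le⟩ u v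
  have hbdgood : ∀ m g, Cpt (bd m g) ∧ bd m g ≤ x (ν m) := by
    intro m g
    constructor
    · exact cpt_finsetSup _ _ (fun j _ => cpt_finsetSup _ _ (fun i _ => (hpkgood m _ _).1))
    · exact Finset.sup_le (fun j _ => Finset.sup_le (fun i _ => (hpkgood m _ _).2))
  have hacpt : ∀ m, Cpt (a m) := fun m => cpt_sup (hSc (ν m)) (hbdgood m _).1
  have hale : ∀ m, a m ≤ x (ν m) := fun m => sup_le (hSle (ν m)) (hbdgood m _).2
  have hanotle : ∀ m, ¬ a m ≤ x (ν (m + 1)) := by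
    intro m hle
    apply hNnot (ν m)
    rw [← hνsucc]
    exact le_trans le_sup_left hle
  refine ⟨a, ν, hνmono, hacpt, hale, hanotle, ?_⟩
  intro i j m hij hjm
  have hexists : ∃ y, (Cpt y ∧ y ≤ x (ν m)) ∧ a j ≤ a i ⊔ y := by
    have hajle : a j ≤ x (Nn (ν i)) := by
      rw [← hνsucc]
      exact (hale j).trans (hxa _ _ (hνmono.le_iff_le.mpr hij))
    obtain ⟨y, hy1, hy2, hy3⟩ := hJ (ν i) (a j) (hacpt j) hajle (ν m)
    exact ⟨y, ⟨hy1, hy2⟩, hy3.trans (sup_le_sup_right le_sup_left _)⟩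
  have hstep : a j ≤ a i ⊔ pk m (a i) (a j) :=
    pickY_le (P := fun y => Cpt y ∧ y ≤ x (ν m)) hexists
  have hpkle : pk m (a i) (a j) ≤ a m := by
    rw [haeq m]
    refine le_trans ?_ le_sup_right
    have h1 : pk m (histA W bd m i) (histA W bd m j) ≤
        (Finset.range j).sup (fun i' => pk m (histA W bd m i') (histA W bd m j)) :=
      Finset.le_sup (f := fun i' => pk m (histA W bd m i') (histA W bd m j))
        (Finset.mem_range.mpr hij)
    have h2 : (Finset.range j).sup (fun i' => pk m (histA W bd m i') (histA W bd m j)) ≤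
        bd m (histA W bd m) :=
      Finset.le_sup (f := fun j' => (Finset.range j').sup
        (fun i' => pk m (histA W bd m i') (histA W bd m j'))) (Finset.mem_range.mpr hjm)
    have h3 := h1.trans h2
    rwa [histA_eq W bd m i (hij.trans hjm), histA_eq W bd m j hjm] at h3
  exact hstep.trans (sup_le le_sup_left (hpkle.trans le_sup_right))


lemma buildOmega (hxa : ∀ p q, p ≤ q → x q ≤ x p) {d : ℕ → L} {ν : ℕ → ℕ}
    (hG : GSeq x d ν)
    (hP3 : ∀ p q m, p ≤ q → q < m → ¬ d m ≤ d p ⊔ d q) :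
    ∃ f : OmegaStarBot → L, (∀ a, Cpt (f a)) ∧ Function.Injective f ∧
      ∀ a b, f (omegaBotJoin a b) = f a ⊔ f b := by
  classical
  set f : OmegaStarBot → L :=
    fun o => Option.rec ⊥ (fun p : OmegaStar => (Finset.Ico p.1.1 p.1.2).sup d) o with hf
  have hfnone : f none = ⊥ := rfl
  have hfsome : ∀ p : OmegaStar, f (some p) = (Finset.Ico p.1.1 p.1.2).sup d := fun _ => rfl
  have hnot : ∀ i (F : Finset ℕ), (∀ k ∈ F, i < k) → ¬ d i ≤ F.sup d :=
    fun i F hF => GSeq.notle_sup hxa hG i F hF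
  have hdbot : ∀ i, d i ≠ ⊥ := by
    intro i h
    exact hnot i ∅ (by simp) (by rw [h]; simp)
  have hcollapse : ∀ i j, i < j → (Finset.Ico i j).sup d ≤ d i ⊔ d (j - 1) := by
    intro i j hij
    apply Finset.sup_le
    intro k hk
    rw [Finset.mem_Ico] at hk
    rcases eq_or_lt_of_le hk.1 with h | h
    · rw [← h]; exact le_sup_left
    · have hk2 : k ≤ j - 1 := by omega
      rcases eq_or_lt_of_le hk2 with h2 | h2
      · rw [h2]; exact le_sup_right
      · exact hG.absorb i k (j - 1) h h2
  refine ⟨f, ?_, ?_, ?_⟩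
  · intro o
    cases o with
    | none => exact cpt_bot
    | some p => exact cpt_finsetSup _ _ (fun k _ => hG.cpt k)
  · intro o1 o2 heq
    cases o1 with
    | none =>
      cases o2 with
      | none => rfl
      | some p =>
        exfalso
        have h1 : d p.1.1 ≤ f (some p) :=
          Finset.le_sup (Finset.mem_Ico.mpr ⟨le_refl _, p.2⟩)
        rw [← heq] at h1
        exact hdbot p.1.1 (le_bot_iff.mp h1)
    | some p =>
      cases o2 with
      | none =>
        exfalso
        have h1 : d p.1.1 ≤ f (some p) :=
          Finset.le_sup (Finset.mem_Ico.mpr ⟨le_refl _, p.2⟩)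
        rw [heq] at h1
        exact hdbot p.1.1 (le_bot_iff.mp h1)
      | some q =>
        obtain ⟨⟨i, j⟩, hij0⟩ := p
        obtain ⟨⟨i', j'⟩, hij0'⟩ := q
        have hij : i < j := hij0
        have hij' : i' < j' := hij0'
        have heq2 : (Finset.Ico i j).sup d = (Finset.Ico i' j').sup d := heq
        have hii : i = i' := by
          by_contra hne
          rcases Nat.lt_or_ge i i' with h | h
          · have h1 : d i ≤ (Finset.Ico i j).sup d :=
              Finset.le_sup (Finset.mem_Ico.mpr ⟨le_refl _, hij⟩)
            rw [heq2] at h1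
            exact hnot i (Finset.Ico i' j')
              (fun k hk => lt_of_lt_of_le h (Finset.mem_Ico.mp hk).1) h1
          · have h' : i' < i := by omega
            have h1 : d i' ≤ (Finset.Ico i' j').sup d :=
              Finset.le_sup (Finset.mem_Ico.mpr ⟨le_refl _, hij'⟩)
            rw [← heq2] at h1
            exact hnot i' (Finset.Ico i j)
              (fun k hk => lt_of_lt_of_le h' (Finset.mem_Ico.mp hk).1) h1
        subst hii
        have hjj : j = j' := by
          by_contra hne
          rcases Nat.lt_or_ge j j' with h | h
          · have h1 : d (j' - 1) ≤ (Finset.Ico i j').sup d :=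
              Finset.le_sup (Finset.mem_Ico.mpr ⟨by omega, by omega⟩)
            rw [← heq2] at h1
            have h2 := h1.trans (hcollapse i j hij)
            exact hP3 i (j - 1) (j' - 1) (by omega) (by omega) h2
          · have h' : j' < j := by omega
            have h1 : d (j - 1) ≤ (Finset.Ico i j).sup d :=
              Finset.le_sup (Finset.mem_Ico.mpr ⟨by omega, by omega⟩)
            rw [heq2] at h1
            have h2 := h1.trans (hcollapse i j' hij')
            exact hP3 i (j' - 1) (j - 1) (by omega) (by omega) h2
        subst hjj
        rfl
  · intro o1 o2
    cases o1 with
    | none =>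
      cases o2 with
      | none =>
        show f none = f none ⊔ f none
        rw [hfnone]; simp
      | some p =>
        show f (some p) = f none ⊔ f (some p)
        rw [hfnone]; simp
    | some p =>
      cases o2 with
      | none =>
        show f (some p) = f (some p) ⊔ f none
        rw [hfnone]; simp
      | some q =>
        have hred : omegaBotJoin (some p) (some q) = some (omegaJoin p q) := rfl
        rw [hred, hfsome, hfsome, hfsome]
        obtain ⟨⟨i, j⟩, hij0⟩ := p
        obtain ⟨⟨i', j'⟩, hij0'⟩ := q
        have hij : i < j := hij0
        have hij' : i' < j' := hij0'
        show (Finset.Ico (min i i') (max j j')).sup d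
            = (Finset.Ico i j).sup d ⊔ (Finset.Ico i' j').sup d
        apply le_antisymm
        · apply Finset.sup_le
          intro k hk
          rw [Finset.mem_Ico] at hk
          by_cases h1 : i ≤ k ∧ k < j
          · exact le_sup_of_le_left (Finset.le_sup (Finset.mem_Ico.mpr h1))
          by_cases h2 : i' ≤ k ∧ k < j'
          · exact le_sup_of_le_right (Finset.le_sup (Finset.mem_Ico.mpr h2))
          have hgap : (j ≤ k ∧ k < i') ∨ (j' ≤ k ∧ k < i) := by omega
          rcases hgap with ⟨ha, hb⟩ | ⟨ha, hb⟩
          · have habs := hG.absorb (j - 1) k i' (by omega) hb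
            refine habs.trans (sup_le_sup ?_ ?_)
            · exact Finset.le_sup (Finset.mem_Ico.mpr ⟨by omega, by omega⟩)
            · exact Finset.le_sup (Finset.mem_Ico.mpr ⟨le_refl _, hij'⟩)
          · have habs := hG.absorb (j' - 1) k i (by omega) hb
            rw [sup_comm]
            refine habs.trans (sup_le_sup ?_ ?_)
            · exact Finset.le_sup (Finset.mem_Ico.mpr ⟨by omega, by omega⟩)
            · exact Finset.le_sup (Finset.mem_Ico.mpr ⟨le_refl _, hij⟩)
        · refine sup_le (Finset.sup_mono ?_) (Finset.sup_mono ?_)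
          · exact Finset.Ico_subset_Ico (min_le_left _ _) (le_max_left _ _)
          · exact Finset.Ico_subset_Ico (min_le_right _ _) (le_max_right _ _)

lemma no_descend {α : Type*} {r : α → α → Prop} (hw : WellFounded r) (g : ℕ → α)
    (h : ∀ n, r (g (n + 1)) (g n)) : False := by
  obtain ⟨m, hm, hmin⟩ := hw.has_min (Set.range g) ⟨g 0, 0, rfl⟩
  obtain ⟨n, rfl⟩ := hm
  exact hmin (g (n + 1)) ⟨n + 1, rfl⟩ (h n)

lemma K_wf (hw : WellFounded ((· < ·) : L → L → Prop)) :
    WellFounded (fun a b : {c : L // Cpt c} => a < b) :=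
  InvImage.wf (Subtype.val : {c : L // Cpt c} → L) hw

lemma fwd_omega (hw : WellFounded ((· < ·) : L → L → Prop))
    (f : OmegaStarBot → L) (hc : ∀ a, Cpt (f a)) (hi : Function.Injective f)
    (hj : ∀ a b, f (omegaBotJoin a b) = f a ⊔ f b) : False := by
  classical
  set T : ℕ → Set L := fun n => {v | ∃ p : OmegaStar, n ≤ p.1.1 ∧ v = f (some p)} with hT
  set g : ℕ → L := fun n => sSup (T n) with hg
  have hmem : ∀ n, f (some ⟨(n, n + 1), Nat.lt_succ_self n⟩) ∈ T n :=
    fun n => ⟨_, le_refl _, rfl⟩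
  have hTS : ∀ n, T (n + 1) ⊆ T n := by
    rintro n v ⟨p, hp, he⟩
    exact ⟨p, by omega, he⟩
  have hdir : ∀ n, DirectedOn (· ≤ ·) (T n) := by
    rintro n v1 ⟨p1, hp1, rfl⟩ v2 ⟨p2, hp2, rfl⟩
    have hred : omegaBotJoin (some p1) (some p2) = some (omegaJoin p1 p2) := rfl
    have hjj := hj (some p1) (some p2)
    rw [hred] at hjj
    refine ⟨f (some (omegaJoin p1 p2)), ⟨omegaJoin p1 p2, le_min hp1 hp2, rfl⟩, ?_, ?_⟩
    · rw [hjj]; exact le_sup_left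
    · rw [hjj]; exact le_sup_right
  have hstep : ∀ n, g (n + 1) < g n := by
    intro n
    have hle : g (n + 1) ≤ g n := sSup_le_sSup (hTS n)
    have hin : f (some ⟨(n, n + 1), Nat.lt_succ_self n⟩) ≤ g n := le_sSup (hmem n)
    have hnot : ¬ f (some ⟨(n, n + 1), Nat.lt_succ_self n⟩) ≤ g (n + 1) := by
      intro hle2
      obtain ⟨v, hvT, hlev⟩ :=
        (CompleteLattice.isCompactElement_iff_le_of_directed_sSup_le L _).mp (hc _)
          (T (n + 1)) ⟨_, hmem (n + 1)⟩ (hdir (n + 1)) hle2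
      obtain ⟨p, hp, rfl⟩ := hvT
      have hred : omegaBotJoin (some ⟨(n, n + 1), Nat.lt_succ_self n⟩) (some p)
          = some (omegaJoin ⟨(n, n + 1), Nat.lt_succ_self n⟩ p) := rfl
      have hjj := hj (some ⟨(n, n + 1), Nat.lt_succ_self n⟩) (some p)
      rw [hred] at hjj
      have hj2 : f (some (omegaJoin ⟨(n, n + 1), Nat.lt_succ_self n⟩ p)) = f (some p) := by
        rw [hjj]; exact sup_eq_right.mpr hlev
      have h3 := hi hj2
      have h4 : omegaJoin ⟨(n, n + 1), Nat.lt_succ_self n⟩ p = p :=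
        Option.some_injective _ h3
      have h5 : min n p.1.1 = p.1.1 := congrArg (fun q : OmegaStar => q.1.1) h4
      omega
    exact lt_of_le_of_ne hle (fun hEq => hnot (by rw [hEq]; exact hin))
  exact no_descend hw g hstep

lemma fwd_finset (hw : WellFounded ((· < ·) : L → L → Prop))
    (f : Finset ℕ → L) (hc : ∀ a, Cpt (f a)) (hi : Function.Injective f)
    (hj : ∀ a b, f (a ∪ b) = f a ⊔ f b) : False := by
  classical
  set T : ℕ → Set L := fun n => {v | ∃ F : Finset ℕ, (∀ i ∈ F, n ≤ i) ∧ v = f F} with hT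
  set g : ℕ → L := fun n => sSup (T n) with hg
  have hmem : ∀ n, f {n} ∈ T n := fun n => ⟨{n}, by simp, rfl⟩
  have hTS : ∀ n, T (n + 1) ⊆ T n := by
    rintro n v ⟨F, hF, he⟩
    exact ⟨F, fun i hiF => by have := hF i hiF; omega, he⟩
  have hdir : ∀ n, DirectedOn (· ≤ ·) (T n) := by
    rintro n v1 ⟨F1, hF1, rfl⟩ v2 ⟨F2, hF2, rfl⟩
    refine ⟨f (F1 ∪ F2), ⟨F1 ∪ F2, ?_, rfl⟩, ?_, ?_⟩
    · intro i hiF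
      rcases Finset.mem_union.mp hiF with h | h
      · exact hF1 i h
      · exact hF2 i h
    · rw [hj]; exact le_sup_left
    · rw [hj]; exact le_sup_right
  have hstep : ∀ n, g (n + 1) < g n := by
    intro n
    have hle : g (n + 1) ≤ g n := sSup_le_sSup (hTS n)
    have hin : f {n} ≤ g n := le_sSup (hmem n)
    have hnot : ¬ f {n} ≤ g (n + 1) := by
      intro hle2
      obtain ⟨v, hvT, hlev⟩ :=
        (CompleteLattice.isCompactElement_iff_le_of_directed_sSup_le L _).mp (hc _)
          (T (n + 1)) ⟨_, hmem (n + 1)⟩ (hdir (n + 1)) hle2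
      obtain ⟨F, hF, rfl⟩ := hvT
      have hj2 : f ({n} ∪ F) = f F := by
        rw [hj]; exact sup_eq_right.mpr hlev
      have h3 := hi hj2
      have h4 : n ∈ F := by
        rw [← h3]
        exact Finset.mem_union_left F (Finset.mem_singleton_self n)
      have := hF n h4
      omega
    exact lt_of_le_of_ne hle (fun hEq => hnot (by rw [hEq]; exact hin))
  exact no_descend hw g hstep

lemma backward (halg : ∀ w : L, ∃ s : Set L, (∀ c ∈ s, Cpt c) ∧ sSup s = w)
    (hK : WellFounded (fun a b : {c : L // Cpt c} => a < b))
    (hOm : ¬ ∃ f : OmegaStarBot → L, (∀ a, Cpt (f a)) ∧ Function.Injective f ∧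
      ∀ a b, f (omegaBotJoin a b) = f a ⊔ f b)
    (hFi : ¬ ∃ f : Finset ℕ → L, (∀ a, Cpt (f a)) ∧ Function.Injective f ∧
      ∀ a b, f (a ∪ b) = f a ⊔ f b)
    (x : ℕ → L) (hdesc : ∀ n, x (n + 1) < x n) : False := by
  classical
  have hxa : ∀ p q, p ≤ q → x q ≤ x p :=
    fun p q h => antitone_nat_of_succ_le (fun n => (hdesc n).le) h
  have hstrict : ∀ n, ∃ c : L, Cpt c ∧ c ≤ x n ∧ ¬ c ≤ x (n + 1) := by
    intro n
    by_contra hcon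
    push_neg at hcon
    obtain ⟨sC, hcs, hsup⟩ := halg (x n)
    have hxle : x n ≤ x (n + 1) := by
      rw [← hsup]
      apply sSup_le
      intro c hc
      exact hcon c (hcs c hc) (by rw [← hsup]; exact le_sSup hc)
    exact absurd (lt_of_le_of_lt hxle (hdesc n)) (lt_irrefl _)
  by_cases hsep : ∃ N, SepF x N
  · obtain ⟨N, hN⟩ := hsep
    exact hFi (caseA hxa hstrict hN)
  · push_neg at hsep
    obtain ⟨a, ν, hG⟩ := caseB hxa hsep
    have hidx : ∀ t, ∃ i, t ≤ i ∧ ∀ j, t ≤ j → ¬ a j < a i := by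
      intro t
      obtain ⟨mm, hmm_mem, hmm_min⟩ := hK.has_min
        {c : {c : L // Cpt c} | ∃ i, t ≤ i ∧ c.1 = a i}
        ⟨⟨a t, hG.cpt t⟩, t, le_refl t, rfl⟩
      obtain ⟨i, hti, hvi⟩ := hmm_mem
      refine ⟨i, hti, fun j htj hlt => ?_⟩
      refine hmm_min ⟨a j, hG.cpt j⟩ ⟨j, htj, rfl⟩ ?_
      exact Subtype.coe_lt_coe.mp (show (⟨a j, hG.cpt j⟩ : {c : L // Cpt c}).val < mm.val by
        rw [hvi]; exact hlt)
    choose idx hidx1 hidx2 using hidx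
    set σ : ℕ → ℕ := pIter (fun t => idx (t + 1)) (idx 0) with hσ
    have hσsucc : ∀ k, σ (k + 1) = idx (σ k + 1) := fun k => rfl
    have hσmono : StrictMono σ := by
      apply strictMono_nat_of_lt_succ
      intro k
      have h1 := hidx1 (σ k + 1)
      rw [hσsucc]
      omega
    have hmin : ∀ k j, σ k < j → ¬ a j < a (σ k) := by
      intro k j hj
      cases k with
      | zero => exact hidx2 0 j (by omega)
      | succ k =>
        rw [hσsucc] at hj ⊢
        have h1 := hidx1 (σ k + 1)
        exact hidx2 (σ k + 1) j (by omega)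
    have hG1 : ∀ p m, p < m → ¬ a (σ m) ≤ a (σ p) := by
      intro p m hpm hle
      have hne : a (σ p) ≠ a (σ m) := GSeq.ne hxa hG (hσmono hpm)
      exact hmin p (σ m) (hσmono hpm) (lt_of_le_of_ne hle hne.symm)
    set b : ℕ → L := a ∘ σ with hb
    have hGb : GSeq x b (ν ∘ σ) := GSeq.comp hxa hG hσmono
    obtain ⟨ρ, hρmono, hρprop⟩ := diag_outer hK hxa hGb
    set d : ℕ → L := b ∘ ρ with hd
    have hGd : GSeq x d ((ν ∘ σ) ∘ ρ) := GSeq.comp hxa hGb hρmono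
    have hP3 : ∀ p q m, p ≤ q → q < m → ¬ d m ≤ d p ⊔ d q := by
      intro p q m hpq hqm
      rcases eq_or_lt_of_le hpq with h | h
      · subst h
        rw [sup_idem]
        exact hG1 (ρ p) (ρ m) (hρmono hqm)
      · exact hρprop p q m h hqm
    exact hOm (buildOmega hxa hGd hP3)

end CPProof

/-- An algebraic lattice `L` is well-founded iff the join-semilattice `K(L)` of
compact elements is well-founded and neither `Ω̲(ω*)` nor `[ω]^{<ω}` embeds into `K(L)` as a
join-subsemilattice. -/
theorem algebraic_wellFounded_iff {L : Type*} [CompleteLattice L]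
    (halg : ∀ x : L, ∃ s : Set L, (∀ c ∈ s, IsCompactElement c) ∧ sSup s = x) :
    WellFounded ((· < ·) : L → L → Prop) ↔
      (WellFounded (fun a b : {c : L // IsCompactElement c} => a < b) ∧
        (¬ ∃ f : OmegaStarBot → L, (∀ a, IsCompactElement (f a)) ∧
            Function.Injective f ∧ ∀ a b, f (omegaBotJoin a b) = f a ⊔ f b) ∧
        ¬ ∃ f : Finset ℕ → L, (∀ a, IsCompactElement (f a)) ∧
            Function.Injective f ∧ ∀ a b, f (a ∪ b) = f a ⊔ f b) := by
  constructor
  · intro hw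
    refine ⟨CPProof.K_wf hw, ?_, ?_⟩
    · rintro ⟨f, h1, h2, h3⟩
      exact CPProof.fwd_omega hw f h1 h2 h3
    · rintro ⟨f, h1, h2, h3⟩
      exact CPProof.fwd_finset hw f h1 h2 h3
  · rintro ⟨hK, hOm, hFi⟩
    by_contra hw
    rw [RelEmbedding.wellFounded_iff_isEmpty, not_isEmpty_iff] at hw
    obtain ⟨e⟩ := hw
    exact CPProof.backward halg hK hOm hFi (⇑e)
      (fun n => e.map_rel_iff.mpr (Nat.lt_succ_self n))
end

section
/- Let P be a join-semilattice. Then J(P), the set of ideals of P ordered by inclusion, is well-founded if and only if P is well-founded and neither Ω(ω*) nor [ω]^{<ω} embeds into P as a join-subsemilattice. -/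
open Set

section CPHelpers

private lemma cpSeqRec {σ : Type*} (s₀ : σ) (Rel : σ → σ → Prop)
    (h : ∀ s, ∃ t, Rel s t) :
    ∃ f : ℕ → σ, f 0 = s₀ ∧ ∀ n, Rel (f n) (f (n + 1)) := by
  choose g hg using h
  refine ⟨fun n => g^[n] s₀, rfl, fun n => ?_⟩
  show Rel (g^[n] s₀) (g^[n+1] s₀)
  rw [Function.iterate_succ_apply']
  exact hg _

private lemma cpWfNoDesc {α : Type*} {r : α → α → Prop} (h : WellFounded r) (f : ℕ → α)
    (hf : ∀ n, r (f (n + 1)) (f n)) : False := by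
  obtain ⟨x, hx, hmin⟩ := h.has_min (Set.range f) ⟨f 0, 0, rfl⟩
  obtain ⟨n, rfl⟩ := hx
  exact hmin (f (n + 1)) ⟨n + 1, rfl⟩ (hf n)

private lemma cpDescOfNotWF {α : Type*} {r : α → α → Prop} (h : ¬ WellFounded r) :
    ∃ f : ℕ → α, ∀ n, r (f (n + 1)) (f n) := by
  have h1 : ∃ x, ¬ Acc r x := by
    by_contra hx
    push_neg at hx
    exact h ⟨fun x => hx x⟩
  obtain ⟨x₀, hx₀⟩ := h1
  have step : ∀ s : {x // ¬ Acc r x}, ∃ t : {x // ¬ Acc r x}, r t.1 s.1 := by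
    rintro ⟨x, hx⟩
    by_contra hc
    push_neg at hc
    refine hx (Acc.intro x fun y hy => ?_)
    by_contra hy'
    exact hc ⟨y, hy'⟩ hy
  obtain ⟨f, -, hf⟩ := cpSeqRec ⟨x₀, hx₀⟩ _ step
  exact ⟨fun n => (f n).1, hf⟩

private lemma cpInfTail {A : Set ℕ} (hA : A.Infinite) (x : ℕ) : (A ∩ Set.Ioi x).Infinite := by
  have he : A ∩ Set.Ioi x = A \ Set.Iic x := by
    ext z
    simp [Set.mem_Ioi, Set.mem_Iic, not_le]
  rw [he]
  exact hA.diff (Set.finite_Iic x)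

private lemma cpMonoEnum {H : Set ℕ} (h : H.Infinite) :
    ∃ e : ℕ → ℕ, StrictMono e ∧ ∀ n, e n ∈ H := by
  have step : ∀ s : {x // x ∈ H}, ∃ t : {x // x ∈ H}, s.1 < t.1 := by
    rintro ⟨x, hx⟩
    obtain ⟨y, hy, hxy⟩ := h.exists_gt x
    exact ⟨⟨y, hy⟩, hxy⟩
  obtain ⟨x₀, hx₀⟩ := h.nonempty
  obtain ⟨f, -, hf⟩ := cpSeqRec ⟨x₀, hx₀⟩ _ step
  exact ⟨fun n => (f n).1, strictMono_nat_of_lt_succ hf, fun n => (f n).2⟩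

private lemma cpPigeon (A : Set ℕ) (hA : A.Infinite) (f : ℕ → Bool) :
    ∃ b, {x | x ∈ A ∧ f x = b}.Infinite := by
  by_contra h
  push_neg at h
  have h1 := h true
  have h2 := h false
  refine hA (Set.Finite.subset (h1.union h2) ?_)
  intro x hx
  rcases Bool.eq_false_or_eq_true (f x) with hb | hb
  -- order: false first? eq_false_or_eq_true gives (= false) ∨ (= true)
  · exact Or.inl ⟨hx, hb⟩
  · exact Or.inr ⟨hx, hb⟩

private lemma cpRamsey2 (A : Set ℕ) (hA : A.Infinite) (col : ℕ → ℕ → Bool) :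
    ∃ H, H ⊆ A ∧ H.Infinite ∧ ∃ b : Bool, ∀ x ∈ H, ∀ y ∈ H, x < y → col x y = b := by
  classical
  let σ := {q : ℕ × Set ℕ × Bool // q.1 ∈ A ∧ q.2.1 ⊆ A ∧ q.2.1.Infinite ∧
    (∀ z ∈ q.2.1, q.1 < z) ∧ ∀ z ∈ q.2.1, col q.1 z = q.2.2}
  have mk : ∀ (x : ℕ) (B : Set ℕ), x ∈ A → B ⊆ A → B.Infinite → (∀ z ∈ B, x < z) →
      ∃ s : σ, s.1.1 = x ∧ s.1.2.1 ⊆ B := by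
    intro x B hxA hBA hBinf hgt
    obtain ⟨b, hb⟩ := cpPigeon B hBinf (col x)
    exact ⟨⟨⟨x, {z | z ∈ B ∧ col x z = b}, b⟩, hxA, fun z hz => hBA hz.1, hb,
      fun z hz => hgt z hz.1, fun z hz => hz.2⟩, rfl, fun z hz => hz.1⟩
  obtain ⟨x₀, hx₀⟩ := hA.nonempty
  obtain ⟨s₀, -, -⟩ := mk x₀ (A ∩ Set.Ioi x₀) hx₀ Set.inter_subset_left (cpInfTail hA x₀)
    (fun z hz => hz.2)
  have step : ∀ s : σ, ∃ t : σ, t.1.1 ∈ s.1.2.1 ∧ t.1.2.1 ⊆ s.1.2.1 := by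
    rintro ⟨⟨x, B, b⟩, hxA, hBA, hBinf, hgt, hcol⟩
    obtain ⟨x', hx'⟩ := hBinf.nonempty
    obtain ⟨t, ht1, ht2⟩ := mk x' (B ∩ Set.Ioi x') (hBA hx')
      (Set.inter_subset_left.trans hBA) (cpInfTail hBinf x') (fun z hz => hz.2)
    exact ⟨t, by rw [ht1]; exact hx', ht2.trans Set.inter_subset_left⟩
  obtain ⟨F, -, hFrel⟩ := cpSeqRec s₀ _ step
  have hnest : ∀ k n, k ≤ n → (F n).1.2.1 ⊆ (F k).1.2.1 := by
    intro k n hkn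
    induction n, hkn using Nat.le_induction with
    | base => exact subset_rfl
    | succ n hn ih => exact (hFrel n).2.trans ih
  have hmemB : ∀ k n, k ≤ n → (F (n + 1)).1.1 ∈ (F k).1.2.1 :=
    fun k n hkn => hnest k n hkn (hFrel n).1
  have hlt : ∀ k l, k < l → (F k).1.1 < (F l).1.1 := by
    intro k l hkl
    obtain ⟨l', rfl⟩ : ∃ l', l = l' + 1 := ⟨l - 1, by omega⟩
    exact (F k).2.2.2.2.1 _ (hmemB k l' (by omega))
  have hcol2 : ∀ k l, k < l → col (F k).1.1 (F l).1.1 = (F k).1.2.2 := by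
    intro k l hkl
    obtain ⟨l', rfl⟩ : ∃ l', l = l' + 1 := ⟨l - 1, by omega⟩
    exact (F k).2.2.2.2.2 _ (hmemB k l' (by omega))
  obtain ⟨b, hbinf⟩ := cpPigeon Set.univ Set.infinite_univ (fun k => (F k).1.2.2)
  have hmono : StrictMono fun k => (F k).1.1 := fun k l h => hlt k l h
  refine ⟨(fun k => (F k).1.1) '' {k | k ∈ Set.univ ∧ (F k).1.2.2 = b}, ?_, ?_, b, ?_⟩
  · rintro - ⟨k, -, rfl⟩
    exact (F k).2.1
  · exact Set.Infinite.image (Set.injOn_of_injective hmono.injective) hbinf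
  · rintro - ⟨k, ⟨-, hk⟩, rfl⟩ - ⟨l, ⟨-, hl⟩, rfl⟩ hxy
    have hkl : k < l := hmono.lt_iff_lt.mp hxy
    rw [hcol2 k l hkl, hk]

private lemma cpRamsey3 (col : ℕ → ℕ → ℕ → Bool) :
    ∃ H : Set ℕ, H.Infinite ∧ ∃ b : Bool,
      ∀ x ∈ H, ∀ y ∈ H, ∀ z ∈ H, x < y → y < z → col x y z = b := by
  classical
  let σ := {q : ℕ × Set ℕ × Bool // q.2.1.Infinite ∧ (∀ z ∈ q.2.1, q.1 < z) ∧
    ∀ y ∈ q.2.1, ∀ z ∈ q.2.1, y < z → col q.1 y z = q.2.2}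
  have mk : ∀ (x : ℕ) (B : Set ℕ), B.Infinite → (∀ z ∈ B, x < z) →
      ∃ s : σ, s.1.1 = x ∧ s.1.2.1 ⊆ B := by
    intro x B hBinf hgt
    obtain ⟨H, hHB, hHinf, b, hb⟩ := cpRamsey2 B hBinf (fun y z => col x y z)
    exact ⟨⟨⟨x, H, b⟩, hHinf, fun z hz => hgt z (hHB hz),
      fun y hy z hz hyz => hb y hy z hz hyz⟩, rfl, hHB⟩
  obtain ⟨s₀, -, -⟩ := mk 0 (Set.Ioi 0) (Set.Ioi_infinite 0) (fun z hz => hz)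
  have step : ∀ s : σ, ∃ t : σ, t.1.1 ∈ s.1.2.1 ∧ t.1.2.1 ⊆ s.1.2.1 := by
    rintro ⟨⟨x, B, b⟩, hBinf, hgt, hcol⟩
    obtain ⟨x', hx'⟩ := hBinf.nonempty
    obtain ⟨t, ht1, ht2⟩ := mk x' (B ∩ Set.Ioi x') (cpInfTail hBinf x') (fun z hz => hz.2)
    exact ⟨t, by rw [ht1]; exact hx', ht2.trans Set.inter_subset_left⟩
  obtain ⟨F, -, hFrel⟩ := cpSeqRec s₀ _ step
  have hnest : ∀ k n, k ≤ n → (F n).1.2.1 ⊆ (F k).1.2.1 := by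
    intro k n hkn
    induction n, hkn using Nat.le_induction with
    | base => exact subset_rfl
    | succ n hn ih => exact (hFrel n).2.trans ih
  have hmemB : ∀ k n, k ≤ n → (F (n + 1)).1.1 ∈ (F k).1.2.1 :=
    fun k n hkn => hnest k n hkn (hFrel n).1
  have hlt : ∀ k l, k < l → (F k).1.1 < (F l).1.1 := by
    intro k l hkl
    obtain ⟨l', rfl⟩ : ∃ l', l = l' + 1 := ⟨l - 1, by omega⟩
    exact (F k).2.2.1 _ (hmemB k l' (by omega))
  have hcol3 : ∀ k l m, k < l → l < m → col (F k).1.1 (F l).1.1 (F m).1.1 = (F k).1.2.2 := by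
    intro k l m hkl hlm
    obtain ⟨l', rfl⟩ : ∃ l', l = l' + 1 := ⟨l - 1, by omega⟩
    obtain ⟨m', rfl⟩ : ∃ m', m = m' + 1 := ⟨m - 1, by omega⟩
    exact (F k).2.2.2 _ (hmemB k l' (by omega)) _ (hmemB k m' (by omega)) (hlt _ _ hlm)
  obtain ⟨b, hbinf⟩ := cpPigeon Set.univ Set.infinite_univ (fun k => (F k).1.2.2)
  have hmono : StrictMono fun k => (F k).1.1 := fun k l h => hlt k l h
  refine ⟨(fun k => (F k).1.1) '' {k | k ∈ Set.univ ∧ (F k).1.2.2 = b}, ?_, b, ?_⟩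
  · exact Set.Infinite.image (Set.injOn_of_injective hmono.injective) hbinf
  · rintro - ⟨k, ⟨-, hk⟩, rfl⟩ - ⟨l, ⟨-, hl⟩, rfl⟩ - ⟨m, ⟨-, hm⟩, rfl⟩ hxy hyz
    have hkl : k < l := hmono.lt_iff_lt.mp hxy
    have hlm : l < m := hmono.lt_iff_lt.mp hyz
    rw [hcol3 k l m hkl hlm, hk]

end CPHelpers
section CPMain

variable {P : Type*} [SemilatticeSup P]

private lemma cpIdealSup {I : Set P} (hI : IsIdeal I) {x y : P}
    (hx : x ∈ I) (hy : y ∈ I) : x ⊔ y ∈ I := by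
  obtain ⟨z, hz, hxz, hyz⟩ := hI.2.1 x hx y hy
  exact hI.2.2 _ _ (sup_le hxz hyz) hz

private lemma cpSupLeSup {s t : Finset ℕ} (h : s ⊆ t) (hs : s.Nonempty) (f : ℕ → P) :
    s.sup' hs f ≤ t.sup' (hs.mono h) f :=
  Finset.sup'_le _ _ fun x hx => Finset.le_sup' f (h hx)

private lemma cpSupSplit {s t u : Finset ℕ} (hs : s.Nonempty) (ht : t.Nonempty)
    (hu : u.Nonempty) (f : ℕ → P) (h : u = s ∪ t) :
    u.sup' hu f = s.sup' hs f ⊔ t.sup' ht f := by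
  subst h
  apply le_antisymm
  · refine Finset.sup'_le _ _ fun x hx => ?_
    rcases Finset.mem_union.mp hx with h | h
    · exact le_sup_of_le_left (Finset.le_sup' f h)
    · exact le_sup_of_le_right (Finset.le_sup' f h)
  · exact sup_le (Finset.sup'_le _ _ fun x hx => Finset.le_sup' f (Finset.mem_union_left _ hx))
      (Finset.sup'_le _ _ fun x hx => Finset.le_sup' f (Finset.mem_union_right _ hx))

private lemma cpIdealSup'Mem {I : Set P} (hI : IsIdeal I) (S : Finset ℕ) (hS : S.Nonempty)
    (g : ℕ → P) (hg : ∀ x ∈ S, g x ∈ I) : S.sup' hS g ∈ I := by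
  induction hS using Finset.Nonempty.cons_induction with
  | singleton a => simpa using hg a (by simp)
  | cons a s ha hs ih =>
      rw [Finset.sup'_cons hs]
      exact cpIdealSup hI (hg a (by simp)) (ih fun x hx => hg x (by simp [hx]))

private lemma cpIndepGives (a : ℕ → P) (e : ℕ → ℕ) (einj : Function.Injective e)
    (hind : ∀ i (Q : Finset ℕ), ↑Q ⊆ Set.range e \ {e i} → ∀ h : Q.Nonempty,
      ¬ a (e i) ≤ Q.sup' h a) :
    ∃ f : Finset ℕ → P, Function.Injective f ∧ ∀ A B, f (A ∪ B) = f A ⊔ f B := by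
  classical
  refine ⟨fun F => (insert (e 0) (F.image fun n => e (n + 1))).sup'
    (Finset.insert_nonempty _ _) a, ?_, ?_⟩
  · have key : ∀ A B : Finset ℕ,
        ((insert (e 0) (A.image fun n => e (n + 1))).sup' (Finset.insert_nonempty _ _) a =
         (insert (e 0) (B.image fun n => e (n + 1))).sup' (Finset.insert_nonempty _ _) a) →
        ∀ n ∈ A, n ∈ B := by
      intro A B hE n hn
      by_contra hnB
      have hmemA : e (n + 1) ∈ insert (e 0) (A.image fun n => e (n + 1)) :=
        Finset.mem_insert_of_mem (Finset.mem_image.mpr ⟨n, hn, rfl⟩)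
      have hle : a (e (n + 1)) ≤
          (insert (e 0) (A.image fun n => e (n + 1))).sup' (Finset.insert_nonempty _ _) a :=
        Finset.le_sup' a hmemA
      rw [hE] at hle
      refine hind (n + 1) (insert (e 0) (B.image fun m => e (m + 1))) ?_
        (Finset.insert_nonempty _ _) hle
      intro x hx
      rw [Finset.coe_insert] at hx
      rcases hx with rfl | hx
      · refine ⟨⟨0, rfl⟩, ?_⟩
        simp only [Set.mem_singleton_iff]
        intro h
        exact absurd (einj h) (by omega)
      · rw [Finset.coe_image] at hx
        obtain ⟨m, hm, rfl⟩ := hx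
        refine ⟨⟨m + 1, rfl⟩, ?_⟩
        simp only [Set.mem_singleton_iff]
        intro h
        have := einj h
        have : m = n := by omega
        exact hnB (this ▸ hm)
    intro A B hAB
    ext n
    exact ⟨fun h => key A B hAB n h, fun h => key B A hAB.symm n h⟩
  · intro A B
    refine cpSupSplit (Finset.insert_nonempty _ _) (Finset.insert_nonempty _ _) _ a ?_
    ext x
    simp only [Finset.mem_insert, Finset.mem_image, Finset.mem_union]
    constructor
    · rintro (rfl | ⟨m, hm | hm, rfl⟩)
      · exact Or.inl (Or.inl rfl)
      · exact Or.inl (Or.inr ⟨m, hm, rfl⟩)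
      · exact Or.inr (Or.inr ⟨m, hm, rfl⟩)
    · rintro ((rfl | ⟨m, hm, rfl⟩) | (rfl | ⟨m, hm, rfl⟩))
      · exact Or.inl rfl
      · exact Or.inr ⟨m, Or.inl hm, rfl⟩
      · exact Or.inl rfl
      · exact Or.inr ⟨m, Or.inr hm, rfl⟩

end CPMain
section CPTrap

variable {P : Type*} [SemilatticeSup P]

private def CPTrap (a : ℕ → P) (Y : Finset ℕ) (R : Set ℕ) : Prop :=
  Y.Nonempty ∧ R.Infinite ∧ (∀ y ∈ Y, ∀ r ∈ R, y < r) ∧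
    ∀ x ∈ R, ∀ R' : Set ℕ, R' ⊆ R → (∀ z ∈ R', x < z) → R'.Infinite →
      ∃ S : Finset ℕ, ↑S ⊆ R' ∧ ∃ h : (Y ∪ S).Nonempty, a x ≤ (Y ∪ S).sup' h a

private lemma cpSupSetEq {s t : Finset ℕ} (hst : s = t) (hs : s.Nonempty) (f : ℕ → P) :
    s.sup' hs f = t.sup' (hst ▸ hs) f := by subst hst; rfl

private lemma cpTrapExists (I : ℕ → Set P) (hid : ∀ n, IsIdeal (I n))
    (a : ℕ → P) (haN : ∀ n, a n ∉ I (n + 1))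
    (hjm : ∀ (S : Finset ℕ) (hS : S.Nonempty) (n : ℕ), (∀ x ∈ S, n ≤ x) → S.sup' hS a ∈ I n)
    (hni : ∀ e : ℕ → ℕ, Function.Injective e →
      ¬ ∀ i (Q : Finset ℕ), ↑Q ⊆ Set.range e \ {e i} → ∀ h : Q.Nonempty,
        ¬ a (e i) ≤ Q.sup' h a)
    (R₀ : Set ℕ) (hR₀ : R₀.Infinite) :
    ∃ Y R, ↑Y ⊆ R₀ ∧ R ⊆ R₀ ∧ CPTrap a Y R := by
  classical
  by_contra hno
  push_neg at hno
  let Good : Finset ℕ × Set ℕ → Prop := fun p =>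
    p.2.Infinite ∧ ↑p.1 ⊆ R₀ ∧ p.2 ⊆ R₀ ∧ (∀ q ∈ p.1, ∀ r ∈ p.2, q < r) ∧
      ∀ q ∈ p.1, ∀ S : Finset ℕ, ↑S ⊆ p.2 → ∀ h : ((p.1 ∪ S).erase q).Nonempty,
        ¬ a q ≤ ((p.1 ∪ S).erase q).sup' h a
  let σ := {p : Finset ℕ × Set ℕ // Good p}
  have step : ∀ s : σ, ∃ t : σ, ∃ x, x ∈ s.1.2 ∧ t.1.1 = insert x s.1.1 ∧
      t.1.2 ⊆ s.1.2 ∧ ∀ z ∈ t.1.2, x < z := by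
    rintro ⟨⟨X, R⟩, hRinf, hXR₀, hRR₀, hord, hinv⟩
    have hstep : ∃ x ∈ R, ∃ R' : Set ℕ, R' ⊆ R ∧ (∀ z ∈ R', x < z) ∧ R'.Infinite ∧
        ∀ S : Finset ℕ, ↑S ⊆ R' → ¬ ∃ h : (X ∪ S).Nonempty, a x ≤ (X ∪ S).sup' h a := by
      rcases X.eq_empty_or_nonempty with rfl | hXne
      · obtain ⟨x, hx⟩ := hRinf.nonempty
        refine ⟨x, hx, R ∩ Set.Ioi x, Set.inter_subset_left, fun z hz => hz.2,
          cpInfTail hRinf x, ?_⟩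
        rintro S hS ⟨h, hle⟩
        have hst : (∅ ∪ S) = S := Finset.empty_union S
        rw [cpSupSetEq hst h a] at hle
        have hmem : S.sup' (hst ▸ h) a ∈ I (x + 1) := by
          refine hjm S (hst ▸ h) (x + 1) fun z hz => ?_
          have := (hS hz).2
          simp only [Set.mem_Ioi] at this
          omega
        exact haN x ((hid (x + 1)).2.2 _ _ hle hmem)
      · by_contra hc
        push_neg at hc
        refine hno X R hXR₀ hRR₀ ⟨hXne, hRinf, hord, ?_⟩
        intro x hx R' hR' hgt hinf
        obtain ⟨S, hS1, hS2⟩ := hc x hx R' hR' hgt hinf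
        exact ⟨S, hS1, hS2⟩
    obtain ⟨x, hxR, R', hR'sub, hgt, hinf, hnoabs⟩ := hstep
    have hxnotX : x ∉ X := fun hmem => lt_irrefl x (hord x hmem x hxR)
    refine ⟨⟨⟨insert x X, R'⟩, ?_⟩, x, hxR, rfl, hR'sub, hgt⟩
    refine ⟨hinf, ?_, hR'sub.trans hRR₀, ?_, ?_⟩
    · rw [Finset.coe_insert]
      exact Set.insert_subset (hRR₀ hxR) hXR₀
    · intro q hq r hr
      rcases Finset.mem_insert.mp hq with rfl | hq
      · exact hgt r hr
      · exact hord q hq r (hR'sub hr)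
    · intro q hq S hS h
      have hxnotS : x ∉ S := fun hmem => lt_irrefl x (hgt x (hS hmem))
      rcases Finset.mem_insert.mp hq with rfl | hq
      · have hset : (insert q X ∪ S).erase q = X ∪ S := by
          rw [Finset.insert_union]
          exact Finset.erase_insert (by
            simp only [Finset.mem_union]
            rintro (h1 | h1)
            · exact hxnotX h1
            · exact hxnotS h1)
        intro hle
        refine hnoabs S (fun z hz => hS hz) ⟨hset ▸ h, ?_⟩
        rwa [cpSupSetEq hset h a] at hle
      · have hset : (insert x X ∪ S).erase q = (X ∪ insert x S).erase q := by
          rw [Finset.insert_union, Finset.union_insert]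
        intro hle
        have hS' : ↑(insert x S) ⊆ R := by
          rw [Finset.coe_insert]
          exact Set.insert_subset hxR (fun z hz => hR'sub (hS hz))
        refine hinv q hq (insert x S) hS' (hset ▸ h) ?_
        rwa [cpSupSetEq hset h a] at hle
  have base : Good (∅, R₀) := by
    refine ⟨hR₀, by simp, subset_rfl, by simp, by simp⟩
  obtain ⟨F, hF0, hFrel⟩ := cpSeqRec (⟨(∅, R₀), base⟩ : σ)
    (fun s t => ∃ x, x ∈ s.1.2 ∧ t.1.1 = insert x s.1.1 ∧
      t.1.2 ⊆ s.1.2 ∧ ∀ z ∈ t.1.2, x < z) step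
  choose xs hxmem hXeq hRsub hgt using hFrel
  have hXmem : ∀ k n, k < n → xs k ∈ (F n).1.1 := by
    intro k n hkn
    induction n with
    | zero => omega
    | succ n ih =>
      rw [hXeq n]
      rcases Nat.lt_or_ge k n with h | h
      · exact Finset.mem_insert_of_mem (ih h)
      · have hkeq : k = n := by omega
        subst hkeq
        exact Finset.mem_insert_self _ _
  have hxsmono : StrictMono xs := by
    apply strictMono_nat_of_lt_succ
    intro n
    exact hgt n _ (hxmem (n + 1))
  apply hni xs hxsmono.injective
  intro i Q hQ hQne hle
  have hQidx : ∀ q ∈ Q, ∃ k, xs k = q := fun q hq => (hQ hq).1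
  choose kf hkf using hQidx
  set N : ℕ := (Q.attach.sup fun q => kf q.1 q.2) + i + 1 with hN
  have hiN : i < N := by omega
  have hQsub : Q ⊆ ((F N).1.1).erase (xs i) := by
    intro q hq
    rw [Finset.mem_erase]
    constructor
    · have h2 := (hQ hq).2
      simp only [Set.mem_singleton_iff] at h2
      exact h2
    · rw [← hkf q hq]
      refine hXmem _ _ ?_
      have hkle : kf q hq ≤ Q.attach.sup fun q => kf q.1 q.2 :=
        Finset.le_sup (f := fun q : {x // x ∈ Q} => kf q.1 q.2) (Finset.mem_attach _ ⟨q, hq⟩)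
      omega
  have hQsub' : Q ⊆ ((F N).1.1 ∪ ∅).erase (xs i) := by
    rw [Finset.union_empty]; exact hQsub
  have hQne' : (((F N).1.1 ∪ ∅).erase (xs i)).Nonempty := hQne.mono hQsub'
  refine (F N).2.2.2.2.2 (xs i) (hXmem i N hiN) ∅ (by simp) hQne' ?_
  exact le_trans hle (cpSupLeSup hQsub' hQne a)

end CPTrap
section CPHard

variable {P : Type*} [SemilatticeSup P]

private theorem cpHard
    (hP : WellFounded ((· < ·) : P → P → Prop))
    (hOm : ¬ ∃ f : OmegaStar → P, Function.Injective f ∧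
      ∀ a b, f (omegaJoin a b) = f a ⊔ f b)
    (hF : ¬ ∃ f : Finset ℕ → P, Function.Injective f ∧ ∀ a b, f (a ∪ b) = f a ⊔ f b)
    (I : ℕ → Set P) (hid : ∀ n, IsIdeal (I n)) (hdec : ∀ n, I (n + 1) ⊆ I n)
    (a : ℕ → P) (haI : ∀ n, a n ∈ I n) (haN : ∀ n, a n ∉ I (n + 1)) : False := by
  classical
  have hImono : ∀ {m n : ℕ}, m ≤ n → I n ⊆ I m := by
    intro m n hmn
    induction n, hmn using Nat.le_induction with
    | base => exact subset_rfl
    | succ n hn ih => exact (hdec n).trans ih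
  have hjm : ∀ (S : Finset ℕ) (hS : S.Nonempty) (n : ℕ), (∀ x ∈ S, n ≤ x) →
      S.sup' hS a ∈ I n := by
    intro S hS n h
    exact cpIdealSup'Mem (hid n) S hS a fun x hx => hImono (h x hx) (haI x)
  have hni : ∀ e : ℕ → ℕ, Function.Injective e →
      ¬ ∀ i (Q : Finset ℕ), ↑Q ⊆ Set.range e \ {e i} → ∀ h : Q.Nonempty,
        ¬ a (e i) ≤ Q.sup' h a := by
    intro e he hind
    exact hF (cpIndepGives a e he hind)
  have htrap := cpTrapExists I hid a haN hjm hni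
  -- nested trap sequence
  have step : ∀ s : {q : Finset ℕ × Set ℕ // CPTrap a q.1 q.2},
      ∃ t : {q : Finset ℕ × Set ℕ // CPTrap a q.1 q.2},
        ↑t.1.1 ⊆ s.1.2 ∧ t.1.2 ⊆ s.1.2 := by
    rintro ⟨⟨Y, R⟩, hT⟩
    obtain ⟨Y', R', h1, h2, hT'⟩ := htrap R hT.2.1
    exact ⟨⟨(Y', R'), hT'⟩, h1, h2⟩
  obtain ⟨Y₀, R₀, -, -, hT₀⟩ := htrap Set.univ Set.infinite_univ
  obtain ⟨T, -, hTrel⟩ := cpSeqRec (⟨(Y₀, R₀), hT₀⟩ :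
    {q : Finset ℕ × Set ℕ // CPTrap a q.1 q.2}) _ step
  set Y : ℕ → Finset ℕ := fun t => (T t).1.1 with hYdef
  set R : ℕ → Set ℕ := fun t => (T t).1.2 with hRdef
  have htrapT : ∀ t, CPTrap a (Y t) (R t) := fun t => (T t).2
  have hYne : ∀ t, (Y t).Nonempty := fun t => (htrapT t).1
  have hRnest : ∀ k n, k ≤ n → R n ⊆ R k := by
    intro k n hkn
    induction n, hkn using Nat.le_induction with
    | base => exact subset_rfl
    | succ n hn ih => exact (hTrel n).2.trans ih
  have hYR : ∀ l m, l < m → (↑(Y m) : Set ℕ) ⊆ R l := by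
    intro l m hlm
    obtain ⟨m', rfl⟩ : ∃ m', m = m' + 1 := ⟨m - 1, by omega⟩
    exact (hTrel m').1.trans (hRnest l m' (by omega))
  set ν : ℕ → ℕ := fun t => (Y t).min' (hYne t) with hνdef
  have hνmem : ∀ t, ν t ∈ Y t := fun t => Finset.min'_mem _ _
  have hνmono : StrictMono ν := by
    apply strictMono_nat_of_lt_succ
    intro t
    have h1 : (ν (t + 1) : ℕ) ∈ R t := hYR t (t + 1) (by omega) (hνmem (t + 1))
    exact (htrapT t).2.2.1 (ν t) (hνmem t) _ h1
  set jY : ℕ → P := fun t => (Y t).sup' (hYne t) a with hjYdef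
  -- tau
  have tau : ∀ l m r, l < m → m < r → ∃ b, r ≤ b ∧ ∃ S : Finset ℕ,
      (∀ x ∈ S, ∃ t, r ≤ t ∧ t ≤ b ∧ x ∈ Y t) ∧
      ∃ h : (Y l ∪ S).Nonempty, jY m ≤ (Y l ∪ S).sup' h a := by
    intro l m r hlm hmr
    have hU : ∀ w ∈ Y m, ∃ S : Finset ℕ,
        (∀ x ∈ S, ∃ t, r ≤ t ∧ x ∈ Y t) ∧
        ∃ h : (Y l ∪ S).Nonempty, a w ≤ (Y l ∪ S).sup' h a := by
      intro w hw
      set U : Set ℕ := {x | ∃ t, r ≤ t ∧ x ∈ Y t} ∩ Set.Ioi w with hUdef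
      have hUR : U ⊆ R l := by
        rintro x ⟨⟨t, htr, hxt⟩, -⟩
        exact hYR l t (by omega) hxt
      have hUinf : U.Infinite := by
        have h1 : {x | ∃ t, r ≤ t ∧ x ∈ Y t}.Infinite := by
          refine Set.infinite_of_injective_forall_mem (f := fun k => ν (r + k)) ?_ ?_
          · intro i j hij
            have := hνmono.injective hij
            omega
          · intro k
            exact ⟨r + k, by omega, hνmem _⟩
        have h2 : U = {x | ∃ t, r ≤ t ∧ x ∈ Y t} \ Set.Iic w := by
          rw [hUdef]
          ext z
          simp [Set.mem_Ioi, Set.mem_Iic, not_le]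
        rw [h2]
        exact h1.diff (Set.finite_Iic w)
      have hwR : w ∈ R l := hYR l m hlm hw
      obtain ⟨S, hS1, hS2⟩ := (htrapT l).2.2.2 w hwR U hUR (fun z hz => hz.2) hUinf
      exact ⟨S, fun x hx => (hS1 hx).1, hS2⟩
    choose Sf hSf1 hSf2 using hU
    set St : Finset ℕ := (Y m).attach.biUnion (fun w => Sf w.1 w.2) with hStdef
    have hlev : ∀ x ∈ St, ∃ t, r ≤ t ∧ x ∈ Y t := by
      intro x hx
      rw [hStdef, Finset.mem_biUnion] at hx
      obtain ⟨w, -, hxw⟩ := hx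
      exact hSf1 w.1 w.2 x hxw
    choose lev hlev1 hlev2 using hlev
    refine ⟨max r (St.attach.sup fun x => lev x.1 x.2), le_max_left _ _, St, ?_, ?_⟩
    · intro x hx
      refine ⟨lev x hx, hlev1 x hx, ?_, hlev2 x hx⟩
      refine le_trans ?_ (le_max_right _ _)
      exact Finset.le_sup (f := fun x : {y // y ∈ St} => lev x.1 x.2)
        (Finset.mem_attach _ ⟨x, hx⟩)
    · refine ⟨(hYne l).mono Finset.subset_union_left, ?_⟩
      refine Finset.sup'_le _ _ fun w hw => ?_
      obtain ⟨h, hle⟩ := hSf2 w hw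
      refine le_trans hle ?_
      have hsub : Y l ∪ Sf w hw ⊆ Y l ∪ St := by
        refine Finset.union_subset_union_right ?_
        rw [hStdef]
        exact Finset.subset_biUnion_of_mem (fun w : {y // y ∈ Y m} => Sf w.1 w.2)
          (Finset.mem_attach _ ⟨w, hw⟩)
      exact cpSupLeSup hsub h a
  choose Bnd hBnd Sw hSw1 hSw2 using tau
  -- windows
  set Bnd' : ℕ → ℕ → ℕ → ℕ :=
    (fun l m r => if h : l < m ∧ m < r then Bnd l m r h.1 h.2 else 0) with hBnd'def
  have hBnd'eq : ∀ l m r (h1 : l < m) (h2 : m < r), Bnd' l m r = Bnd l m r h1 h2 := by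
    intro l m r h1 h2
    simp only [hBnd'def]
    rw [dif_pos ⟨h1, h2⟩]
  set bnd : ℕ → ℕ := fun W => max (W + 1)
    (((Finset.range (W + 1)) ×ˢ (Finset.range (W + 1))).sup fun p =>
      Bnd' p.1 p.2 (W + 1)) with hbnddef
  set w : ℕ → ℕ := fun s => bnd^[s] 0 with hwdef
  have hwsucc : ∀ s, w (s + 1) = bnd (w s) := by
    intro s
    rw [hwdef]
    show bnd^[s+1] 0 = bnd (bnd^[s] 0)
    rw [Function.iterate_succ_apply']
  have hwlt : ∀ s, w s < w (s + 1) := by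
    intro s
    rw [hwsucc s]
    have h1 : w s + 1 ≤ bnd (w s) := le_max_left _ _
    omega
  have hwmono : StrictMono w := strictMono_nat_of_lt_succ hwlt
  set Z : ℕ → Finset ℕ := fun s => (Finset.Icc (w s + 1) (w (s + 1))).biUnion Y with hZdef
  have hZmem : ∀ s t, w s + 1 ≤ t → t ≤ w (s + 1) → ∀ x ∈ Y t, x ∈ Z s := by
    intro s t h1 h2 x hx
    rw [hZdef]
    exact Finset.mem_biUnion.mpr ⟨t, Finset.mem_Icc.mpr ⟨h1, h2⟩, hx⟩
  have hZne : ∀ s, (Z s).Nonempty :=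
    fun s => ⟨ν (w s + 1), hZmem s (w s + 1) le_rfl (hwlt s) _ (hνmem _)⟩
  set cZ : ℕ → P := fun s => (Z s).sup' (hZne s) a with hcZdef
  have hKEY : ∀ s l m, l < m → m ≤ w s → jY m ≤ jY l ⊔ cZ s := by
    intro s l m hlm hms
    have hmr : m < w s + 1 := by omega
    have hble : Bnd l m (w s + 1) hlm hmr ≤ w (s + 1) := by
      rw [hwsucc s]
      refine le_trans ?_ (le_max_right _ _)
      have hmem : (l, m) ∈ Finset.range (w s + 1) ×ˢ Finset.range (w s + 1) := by
        rw [Finset.mem_product]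
        simp only [Finset.mem_range]
        omega
      have hle := Finset.le_sup (f := fun p : ℕ × ℕ => Bnd' p.1 p.2 (w s + 1)) hmem
      have hle2 : Bnd' l m (w s + 1) ≤
          (Finset.range (w s + 1) ×ˢ Finset.range (w s + 1)).sup
            (fun p : ℕ × ℕ => Bnd' p.1 p.2 (w s + 1)) := hle
      rwa [hBnd'eq l m (w s + 1) hlm hmr] at hle2
    obtain ⟨h, hle⟩ := hSw2 l m (w s + 1) hlm hmr
    refine le_trans hle ?_
    refine Finset.sup'_le _ _ fun x hx => ?_
    rcases Finset.mem_union.mp hx with hxl | hxs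
    · exact le_sup_of_le_left (Finset.le_sup' a hxl)
    · obtain ⟨t, ht1, ht2, ht3⟩ := hSw1 l m (w s + 1) hlm hmr x hxs
      exact le_sup_of_le_right (Finset.le_sup' a (hZmem s t ht1 (le_trans ht2 hble) _ ht3))
  set μ : ℕ → ℕ := fun s => ν (w s + 1) with hμdef
  have hμmono : StrictMono μ := by
    intro s s' h
    exact hνmono (by have := hwmono h; omega)
  have hcZ_mem : ∀ s, cZ s ∈ I (μ s) := by
    intro s
    refine hjm _ _ _ fun x hx => ?_
    obtain ⟨t, htIcc, hxt⟩ := Finset.mem_biUnion.mp hx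
    have h1 : ν t ≤ x := Finset.min'_le _ x hxt
    have h2 := (Finset.mem_Icc.mp htIcc).1
    have h3 : ν (w s + 1) ≤ ν t := hνmono.monotone h2
    show ν (w s + 1) ≤ x
    omega
  have hcZ_lb : ∀ s, a (μ s) ≤ cZ s := by
    intro s
    exact Finset.le_sup' a (hZmem s (w s + 1) le_rfl (hwlt s) _ (hνmem _))
  have hcZ_not : ∀ s, cZ s ∉ I (μ s + 1) := by
    intro s hmem
    exact haN (μ s) ((hid _).2.2 _ _ (hcZ_lb s) hmem)
  have hM : ∀ p q r, p < q → q < r → cZ q ≤ cZ p ⊔ cZ r := by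
    intro p q r hpq hqr
    refine Finset.sup'_le _ _ fun x hx => ?_
    obtain ⟨m, hmIcc, hxm⟩ := Finset.mem_biUnion.mp hx
    obtain ⟨hm1, hm2⟩ := Finset.mem_Icc.mp hmIcc
    have hax : a x ≤ jY m := Finset.le_sup' a hxm
    have hlm : w p + 1 < m := by
      have h1 : w p + 1 ≤ w (p + 1) := hwlt p
      have h2 : w (p + 1) ≤ w q := hwmono.monotone (by omega)
      omega
    have hKEYr := hKEY r (w p + 1) m hlm (by
      have h3 : w (q + 1) ≤ w r := hwmono.monotone (by omega)
      omega)
    refine le_trans hax (le_trans hKEYr ?_)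
    have hjlcp : jY (w p + 1) ≤ cZ p := by
      refine Finset.sup'_le _ _ fun y hy => Finset.le_sup' a (hZmem p (w p + 1) le_rfl (hwlt p) _ hy)
    exact sup_le_sup_right hjlcp _
  -- final stage
  obtain ⟨H, hHinf, b, hhom⟩ := cpRamsey3
    (fun x y z => if cZ z ≤ cZ x ⊔ cZ y then true else false)
  obtain ⟨e, hemono, heH⟩ := cpMonoEnum hHinf
  cases b with
  | true =>
    have habs : ∀ k, cZ (e (k + 2)) ≤ cZ (e k) ⊔ cZ (e (k + 1)) := by
      intro k
      have h := hhom (e k) (heH k) (e (k + 1)) (heH (k + 1)) (e (k + 2)) (heH (k + 2))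
        (hemono (by omega)) (hemono (by omega))
      by_contra hcon
      rw [if_neg hcon] at h
      exact Bool.false_ne_true h
    apply cpWfNoDesc hP (fun k => cZ (e k) ⊔ cZ (e (k + 1)))
    intro k
    have hle : cZ (e (k + 1)) ⊔ cZ (e (k + 2)) ≤ cZ (e k) ⊔ cZ (e (k + 1)) :=
      sup_le le_sup_right (habs k)
    refine lt_of_le_of_ne hle ?_
    intro heq
    have h1 : cZ (e (k + 1)) ⊔ cZ (e (k + 2)) ∈ I (μ (e (k + 1))) := by
      refine cpIdealSup (hid _) (hcZ_mem _) ?_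
      exact hImono (le_of_lt (hμmono (hemono (by omega)))) (hcZ_mem _)
    have h2 : μ (e k) + 1 ≤ μ (e (k + 1)) := Nat.succ_le_of_lt (hμmono (hemono (by omega)))
    have h3 : cZ (e k) ⊔ cZ (e (k + 1)) ∈ I (μ (e k) + 1) := by
      rw [← heq]
      exact hImono h2 h1
    exact hcZ_not (e k) ((hid _).2.2 _ _ le_sup_left h3)
  | false =>
    apply hOm
    refine ⟨fun p => cZ (e p.1.1) ⊔ cZ (e p.1.2), ?_, ?_⟩
    · have hsep : ∀ u v : OmegaStar, u.1.1 < v.1.1 →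
          cZ (e u.1.1) ⊔ cZ (e u.1.2) = cZ (e v.1.1) ⊔ cZ (e v.1.2) → False := by
        intro u v huv heq
        have hmem : cZ (e v.1.1) ⊔ cZ (e v.1.2) ∈ I (μ (e v.1.1)) := by
          refine cpIdealSup (hid _) (hcZ_mem _) ?_
          exact hImono (le_of_lt (hμmono (hemono v.2))) (hcZ_mem _)
        have h2 : μ (e u.1.1) + 1 ≤ μ (e v.1.1) := Nat.succ_le_of_lt (hμmono (hemono huv))
        have h3 : cZ (e u.1.1) ∈ I (μ (e u.1.1) + 1) := by
          refine (hid _).2.2 _ _ ?_ (hImono h2 hmem)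
          rw [← heq]
          exact le_sup_left
        exact hcZ_not _ h3
      have hsep2 : ∀ i j j' : ℕ, i < j → j < j' →
          cZ (e j') ≤ cZ (e i) ⊔ cZ (e j) → False := by
        intro i j j' h1 h2 hle
        have h := hhom (e i) (heH i) (e j) (heH j) (e j') (heH j')
          (hemono h1) (hemono h2)
        rw [if_pos hle] at h
        simp at h
      intro u v heqr
      have heq : cZ (e u.1.1) ⊔ cZ (e u.1.2) = cZ (e v.1.1) ⊔ cZ (e v.1.2) := heqr
      have h1 : u.1.1 = v.1.1 := by
        rcases Nat.lt_trichotomy u.1.1 v.1.1 with h | h | h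
        · exact absurd heq (fun he => hsep u v h he)
        · exact h
        · exact absurd heq.symm (fun he => hsep v u h he)
      have h2 : u.1.2 = v.1.2 := by
        rcases Nat.lt_trichotomy u.1.2 v.1.2 with h | h | h
        · exfalso
          refine hsep2 v.1.1 u.1.2 v.1.2 ?_ h ?_
          · rw [← h1]
            exact u.2
          · have hx : cZ (e v.1.2) ≤ cZ (e v.1.1) ⊔ cZ (e v.1.2) := le_sup_right
            rw [← heq, h1] at hx
            exact hx
        · exact h
        · exfalso
          refine hsep2 u.1.1 v.1.2 u.1.2 ?_ h ?_
          · rw [h1]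
            exact v.2
          · have hx : cZ (e u.1.2) ≤ cZ (e u.1.1) ⊔ cZ (e u.1.2) := le_sup_right
            rw [heq, ← h1] at hx
            exact hx
      exact Subtype.ext (Prod.ext h1 h2)
    · rintro p q
      have hcover : ∀ A x B : ℕ, A ≤ x → x ≤ B → cZ (e x) ≤ cZ (e A) ⊔ cZ (e B) := by
        intro A x B hAx hxB
        rcases eq_or_lt_of_le hAx with rfl | h1
        · exact le_sup_left
        rcases eq_or_lt_of_le hxB with rfl | h2
        · exact le_sup_right
        exact hM (e A) (e x) (e B) (hemono h1) (hemono h2)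
      show cZ (e (min p.1.1 q.1.1)) ⊔ cZ (e (max p.1.2 q.1.2)) =
        (cZ (e p.1.1) ⊔ cZ (e p.1.2)) ⊔ (cZ (e q.1.1) ⊔ cZ (e q.1.2))
      apply le_antisymm
      · apply sup_le
        · rcases le_total p.1.1 q.1.1 with h | h
          · rw [min_eq_left h]
            exact le_sup_of_le_left le_sup_left
          · rw [min_eq_right h]
            exact le_sup_of_le_right le_sup_left
        · rcases le_total p.1.2 q.1.2 with h | h
          · rw [max_eq_right h]
            exact le_sup_of_le_right le_sup_right
          · rw [max_eq_left h]
            exact le_sup_of_le_left le_sup_right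
      · refine sup_le (sup_le ?_ ?_) (sup_le ?_ ?_)
        · exact hcover _ _ _ (min_le_left _ _) (le_trans (le_of_lt p.2) (le_max_left _ _))
        · exact hcover _ _ _ (le_trans (min_le_left _ _) (le_of_lt p.2)) (le_max_left _ _)
        · exact hcover _ _ _ (min_le_right _ _) (le_trans (le_of_lt q.2) (le_max_right _ _))
        · exact hcover _ _ _ (le_trans (min_le_right _ _) (le_of_lt q.2)) (le_max_right _ _)

end CPHard

section CPFinal

/-- For a join-semilattice `P`, the poset `J(P)` of ideals of `P` (ordered by
inclusion) is well-founded iff `P` is well-founded and neither `Ω(ω*)` nor `[ω]^{<ω}` embeds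
into `P` as a join-subsemilattice. -/
theorem ideals_wellFounded_iff {P : Type*} [SemilatticeSup P] :
    WellFounded (fun I J : {I : Set P // IsIdeal I} => I < J) ↔
      (WellFounded ((· < ·) : P → P → Prop) ∧
        (¬ ∃ f : OmegaStar → P, Function.Injective f ∧
            ∀ a b, f (omegaJoin a b) = f a ⊔ f b) ∧
        ¬ ∃ f : Finset ℕ → P, Function.Injective f ∧
            ∀ a b, f (a ∪ b) = f a ⊔ f b) := by
  constructor
  · intro hJ
    have princ : ∀ x : P, IsIdeal {z : P | z ≤ x} := by
      intro x
      exact ⟨⟨x, le_rfl⟩, fun u hu v hv => ⟨x, le_rfl, hu, hv⟩,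
        fun u v huv hv => le_trans huv hv⟩
    refine ⟨?_, ?_, ?_⟩
    · have hword : WellFounded (InvImage (fun I J : {I : Set P // IsIdeal I} => I < J)
        (fun x : P => ⟨{z | z ≤ x}, princ x⟩)) := InvImage.wf _ hJ
      refine Subrelation.wf ?_ hword
      intro x y hxy
      show (⟨{z | z ≤ x}, princ x⟩ : {I : Set P // IsIdeal I}) < ⟨{z | z ≤ y}, princ y⟩
      rw [Subtype.mk_lt_mk]
      refine lt_of_le_of_ne (fun z hz => le_trans hz hxy.le) ?_
      intro hE
      have hy : y ∈ {z : P | z ≤ y} := le_refl y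
      rw [← hE] at hy
      exact (show x < y from hxy).not_ge hy
    · rintro ⟨f, hinj, hjoin⟩
      have hle : ∀ (n j j' : ℕ) (h : n < j) (h' : n < j'), j ≤ j' →
          f ⟨(n, j), h⟩ ≤ f ⟨(n, j'), h'⟩ := by
        intro n j j' h h' hjj
        have heq : omegaJoin ⟨(n, j), h⟩ ⟨(n, j'), h'⟩ = ⟨(n, j'), h'⟩ := by
          apply Subtype.ext
          simp only [omegaJoin]
          rw [Prod.ext_iff]
          constructor <;> simp <;> omega
        have h2 := hjoin ⟨(n, j), h⟩ ⟨(n, j'), h'⟩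
        rw [heq] at h2
        rw [h2]
        exact le_sup_left
      set Jn : ℕ → Set P := fun n => {z | ∃ j, ∃ h : n < j, z ≤ f ⟨(n, j), h⟩} with hJndef
      have hJid : ∀ n, IsIdeal (Jn n) := by
        intro n
        refine ⟨⟨f ⟨(n, n + 1), by omega⟩, ⟨n + 1, by omega, le_rfl⟩⟩, ?_, ?_⟩
        · rintro x ⟨j, hj, hx⟩ y ⟨j', hj', hy⟩
          refine ⟨f ⟨(n, max j j'), by omega⟩, ⟨max j j', by omega, le_rfl⟩, ?_, ?_⟩
          · exact le_trans hx (hle n j (max j j') hj (by omega) (le_max_left _ _))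
          · exact le_trans hy (hle n j' (max j j') hj' (by omega) (le_max_right _ _))
        · rintro x y hxy ⟨j, hj, hy⟩
          exact ⟨j, hj, le_trans hxy hy⟩
      have hJdesc : ∀ n, Jn (n + 1) ⊆ Jn n := by
        rintro n z ⟨j, hj, hz⟩
        refine ⟨j, by omega, le_trans hz ?_⟩
        have heq : omegaJoin ⟨(n + 1, j), hj⟩ ⟨(n, j), by omega⟩ = ⟨(n, j), by omega⟩ := by
          apply Subtype.ext
          simp only [omegaJoin]
          rw [Prod.ext_iff]
          constructor <;> simp <;> omega
        have h2 := hjoin ⟨(n + 1, j), hj⟩ ⟨(n, j), by omega⟩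
        rw [heq] at h2
        rw [h2]
        exact le_sup_left
      have hwit : ∀ n, f ⟨(n, n + 1), by omega⟩ ∈ Jn n ∧ f ⟨(n, n + 1), by omega⟩ ∉ Jn (n + 1) := by
        intro n
        refine ⟨⟨n + 1, by omega, le_rfl⟩, ?_⟩
        rintro ⟨j, hj, hle'⟩
        have heq : omegaJoin ⟨(n, n + 1), by omega⟩ ⟨(n + 1, j), hj⟩ = ⟨(n, j), by omega⟩ := by
          apply Subtype.ext
          simp only [omegaJoin]
          rw [Prod.ext_iff]
          constructor <;> simp <;> omega
        have h1 := hjoin ⟨(n, n + 1), by omega⟩ ⟨(n + 1, j), hj⟩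
        rw [heq] at h1
        have h2 : f (⟨(n, j), by omega⟩ : OmegaStar) = f ⟨(n + 1, j), hj⟩ := by
          rw [h1]
          exact sup_eq_right.mpr hle'
        have h3 := congrArg (fun t : OmegaStar => t.1.1) (hinj h2)
        simp at h3
      apply cpWfNoDesc hJ (fun n => (⟨Jn n, hJid n⟩ : {I : Set P // IsIdeal I}))
      intro n
      rw [Subtype.mk_lt_mk]
      refine lt_of_le_of_ne (hJdesc n) ?_
      intro hE
      refine (hwit n).2 ?_
      rw [hE]
      exact (hwit n).1
    · rintro ⟨f, hinj, hjoin⟩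
      have hle : ∀ A B : Finset ℕ, A ⊆ B → f A ≤ f B := by
        intro A B hAB
        have hU : A ∪ B = B := Finset.union_eq_right.mpr hAB
        have h2 := hjoin A B
        rw [hU] at h2
        rw [h2]
        exact le_sup_left
      set Jn : ℕ → Set P := fun n => {z | ∃ F : Finset ℕ, (∀ m ∈ F, n ≤ m) ∧ z ≤ f F}
        with hJndef
      have hJid : ∀ n, IsIdeal (Jn n) := by
        intro n
        refine ⟨⟨f ∅, ∅, by simp, le_rfl⟩, ?_, ?_⟩
        · rintro x ⟨Fx, hFx, hx⟩ y ⟨Fy, hFy, hy⟩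
          refine ⟨f (Fx ∪ Fy), ⟨Fx ∪ Fy, ?_, le_rfl⟩, ?_, ?_⟩
          · intro m hm
            rcases Finset.mem_union.mp hm with h | h
            exacts [hFx m h, hFy m h]
          · exact le_trans hx (hle _ _ Finset.subset_union_left)
          · exact le_trans hy (hle _ _ Finset.subset_union_right)
        · rintro x y hxy ⟨F, hF, hy⟩
          exact ⟨F, hF, le_trans hxy hy⟩
      have hJdesc : ∀ n, Jn (n + 1) ⊆ Jn n := by
        rintro n z ⟨F, hF, hz⟩
        exact ⟨F, fun m hm => by have := hF m hm; omega, hz⟩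
      have hwit : ∀ n, f {n} ∈ Jn n ∧ f {n} ∉ Jn (n + 1) := by
        intro n
        refine ⟨⟨{n}, by simp, le_rfl⟩, ?_⟩
        rintro ⟨F, hF, hle'⟩
        have h2 : f ({n} ∪ F) = f F := by
          rw [hjoin]
          exact sup_eq_right.mpr hle'
        have h3 := hinj h2
        have hn : n ∈ F := by
          rw [← h3]
          simp
        have := hF n hn
        omega
      apply cpWfNoDesc hJ (fun n => (⟨Jn n, hJid n⟩ : {I : Set P // IsIdeal I}))
      intro n
      rw [Subtype.mk_lt_mk]
      refine lt_of_le_of_ne (hJdesc n) ?_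
      intro hE
      refine (hwit n).2 ?_
      rw [hE]
      exact (hwit n).1
  · rintro ⟨hP, hOm, hF⟩
    by_contra hJ
    obtain ⟨g, hg⟩ := cpDescOfNotWF hJ
    have hdec : ∀ n, (g (n + 1)).1 ⊂ (g n).1 := by
      intro n
      exact Subtype.coe_lt_coe.mpr (hg n)
    choose aa haI haN using fun n => Set.exists_of_ssubset (hdec n)
    exact cpHard hP hOm hF (fun n => (g n).1) (fun n => (g n).2)
      (fun n => (hdec n).subset) aa haI haN


end CPFinal
end

section
/- Let P be a join-semilattice and let ι be an infinite set. The following are equivalent: (i) there is an injection g : ι → P whose image is an independent subset of P; (ii) the join-semilattice of finite subsets of ι (ordered by inclusion, with join given by union) embeds into P as a join-subsemilattice; (iii) there is an order-embedding of the poset of finite subsets of ι (ordered by inclusion) into P; (iv) there is an order-embedding of the powerset of ι (ordered by inclusion) into J(P). -/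
open Set

lemma ideal_finset_bound {P : Type*} [Preorder P] {I : Set P} (hI : IsIdeal I)
    (F : Finset P) (hF : F.Nonempty) (hsub : ↑F ⊆ I) : ∃ z ∈ I, ∀ y ∈ F, y ≤ z := by
  revert hsub
  induction hF using Finset.Nonempty.cons_induction with
  | singleton a =>
      exact fun hsub => ⟨a, hsub (by simp), by simp⟩
  | cons a s ha hs ih =>
      intro hsub
      obtain ⟨z, hz, hzb⟩ := ih (fun x hx => hsub (by simp [hx]))
      obtain ⟨w, hw, haw, hzw⟩ := hI.2.1 a (hsub (by simp)) z hz
      exact ⟨w, hw, by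
        intro y hy
        rcases Finset.mem_cons.mp hy with rfl | hy
        · exact haw
        · exact (hzb y hy).trans hzw⟩


/-- For a join-semilattice `P` and an infinite set `ι`, the following are
equivalent: (i) there is an injection `ι → P` with independent image; (ii) the join-semilattice
of finite subsets of `ι` embeds into `P` as a join-subsemilattice; (iii) the poset of finite
subsets of `ι` order-embeds into `P`; (iv) the powerset of `ι` order-embeds into `J(P)`. -/
theorem independent_tfae {P : Type*} [SemilatticeSup P] (ι : Type*) [Infinite ι]
    [DecidableEq ι] :
    List.TFAE [
      ∃ g : ι → P, Function.Injective g ∧ IndepSet (Set.range g),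
      ∃ f : Finset ι → P, Function.Injective f ∧ ∀ a b, f (a ∪ b) = f a ⊔ f b,
      Nonempty (Finset ι ↪o P),
      Nonempty (Set ι ↪o {I : Set P // IsIdeal I})] := by
  tfae_have 1 → 2 := by
    classical
    rintro ⟨g, hginj, hind⟩
    obtain ⟨t⟩ : Nonempty (Option ι ≃ ι) := by
      rw [← Cardinal.eq, Cardinal.mk_option, Cardinal.add_one_eq (Cardinal.aleph0_le_mk ι)]
    set r : ι := t none with hr
    set A : Finset ι → Finset ι := fun F => insert r (F.image (fun i => t (some i)))
      with hA
    have hAne : ∀ F, (A F).Nonempty := fun F => Finset.insert_nonempty _ _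
    have hins : ∀ s u : Finset ι, insert r s ∪ insert r u = insert r (s ∪ u) := by
      intro s u; ext x; simp [Finset.mem_union, Finset.mem_insert]
    have hAunion : ∀ a b, A (a ∪ b) = A a ∪ A b := by
      intro a b
      rw [hA]
      simp only
      rw [Finset.image_union, hins]
    have hmem : ∀ {i : ι} {b : Finset ι}, t (some i) ∈ A b → i ∈ b := by
      intro i b hib
      rcases Finset.mem_insert.mp hib with h | h
      · exact absurd (t.injective h) (by simp)
      · obtain ⟨j, hj, hji⟩ := Finset.mem_image.mp h
        rcases Option.some.inj (t.injective hji) with rfl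
        exact hj
    refine ⟨fun F => (A F).sup' (hAne F) g, ?_, ?_⟩
    · have key : ∀ a b : Finset ι, (A a).sup' (hAne a) g ≤ (A b).sup' (hAne b) g → a ⊆ b := by
        intro a b hab i hi
        by_contra hib
        have hmemA : t (some i) ∈ A a := Finset.mem_insert_of_mem (Finset.mem_image_of_mem _ hi)
        have hx : g (t (some i)) ≤ (A b).sup' (hAne b) g :=
          le_trans (Finset.le_sup' g hmemA) hab
        have hFne : ((A b).image g).Nonempty := (hAne b).image g
        have hFsub : ↑((A b).image g) ⊆ Set.range g \ {g (t (some i))} := by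
          intro y hy
          obtain ⟨j, hj, rfl⟩ := Finset.mem_image.mp (Finset.mem_coe.mp hy)
          refine ⟨⟨j, rfl⟩, ?_⟩
          simp only [Set.mem_singleton_iff]
          intro hgj
          exact hib (hmem (hginj hgj ▸ hj))
        refine hind (g (t (some i))) ⟨_, rfl⟩ _ hFne hFsub ?_
        have heq : ((A b).image g).sup' hFne id = (A b).sup' (hAne b) g := by
          apply le_antisymm
          · apply Finset.sup'_le
            intro y hy
            obtain ⟨j, hj, rfl⟩ := Finset.mem_image.mp hy
            exact Finset.le_sup' g hj
          · apply Finset.sup'_le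
            intro j hj
            exact Finset.le_sup' id (Finset.mem_image_of_mem g hj)
        rw [heq]
        exact hx
      intro a b hab
      exact le_antisymm (key a b hab.le) (key b a hab.ge)
    · intro a b
      show (A (a ∪ b)).sup' (hAne _) g = (A a).sup' (hAne a) g ⊔ (A b).sup' (hAne b) g
      rw [Finset.sup'_congr (hAne (a ∪ b)) (hAunion a b) (fun x _ => rfl),
        Finset.sup'_union (hAne a) (hAne b) g]
  tfae_have 2 → 3 := by
    rintro ⟨f, hfinj, hfsup⟩
    refine ⟨OrderEmbedding.ofMapLEIff f ?_⟩
    intro a b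
    constructor
    · intro h
      have h1 : f (a ∪ b) = f b := by
        rw [hfsup]; exact sup_eq_right.mpr h
      have h2 := hfinj h1
      intro i hi
      rw [← h2]; exact Finset.mem_union_left _ hi
    · intro h
      have h1 : a ∪ b = b := Finset.union_eq_right.mpr h
      calc f a ≤ f a ⊔ f b := le_sup_left
        _ = f (a ∪ b) := (hfsup a b).symm
        _ = f b := by rw [h1]
  tfae_have 3 → 4 := by
    rintro ⟨e⟩
    set m : Set ι → Set P := fun A => {x | ∃ F : Finset ι, ↑F ⊆ A ∧ x ≤ e F} with hm
    have hideal : ∀ A, IsIdeal (m A) := by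
      intro A
      refine ⟨⟨e ∅, ∅, by simp, le_refl _⟩, ?_, ?_⟩
      · rintro x ⟨F, hF, hxF⟩ y ⟨G, hG, hyG⟩
        refine ⟨e (F ∪ G), ⟨F ∪ G, by
            rw [Finset.coe_union]; exact Set.union_subset hF hG, le_refl _⟩,
          hxF.trans (e.monotone (Finset.subset_union_left)),
          hyG.trans (e.monotone (Finset.subset_union_right))⟩
      · rintro x y hxy ⟨F, hF, hyF⟩
        exact ⟨F, hF, hxy.trans hyF⟩
    refine ⟨OrderEmbedding.ofMapLEIff (fun A => ⟨m A, hideal A⟩) ?_⟩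
    intro a b
    constructor
    · intro h i hi
      have h1 : e {i} ∈ m a := ⟨{i}, by simpa using hi, le_refl _⟩
      obtain ⟨G, hG, hiG⟩ := h h1
      have h2 : ({i} : Finset ι) ⊆ G := e.le_iff_le.mp hiG
      exact hG (h2 (Finset.mem_singleton_self i))
    · rintro h x ⟨F, hF, hxF⟩
      exact ⟨F, hF.trans h, hxF⟩
  tfae_have 4 → 1 := by
    rintro ⟨h⟩
    have hpick : ∀ i : ι, ∃ x, x ∈ (h {i}).1 ∧ x ∉ (h ({i}ᶜ)).1 := by
      intro i
      have h1 : ¬ (h {i} ≤ h ({i}ᶜ)) := by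
        rw [h.le_iff_le]
        intro hc
        exact (hc rfl) rfl
      rw [Subtype.mk_le_mk] at h1
      obtain ⟨x, hx1, hx2⟩ := Set.not_subset.mp h1
      exact ⟨x, hx1, hx2⟩
    choose g hg1 hg2 using hpick
    have hmono : ∀ {i j : ι}, i ≠ j → g i ∈ (h ({j}ᶜ)).1 := by
      intro i j hij
      have h1 : h {i} ≤ h ({j}ᶜ) := h.le_iff_le.mpr (by
        intro x hx
        simp only [Set.mem_singleton_iff] at hx
        subst hx
        simpa using hij)
      exact h1 (hg1 i)
    have hginj : Function.Injective g := by
      intro i j hij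
      by_contra hne
      exact hg2 j (hij ▸ hmono hne)
    refine ⟨g, hginj, ?_⟩
    rintro x ⟨i, rfl⟩ F hF hFsub hle
    have hFsub' : ↑F ⊆ (h ({i}ᶜ)).1 := by
      intro y hy
      obtain ⟨⟨j, rfl⟩, hyne⟩ := hFsub hy
      have hji : j ≠ i := fun hji => hyne (by rw [hji]; exact rfl)
      exact hmono hji
    obtain ⟨z, hz, hzb⟩ := ideal_finset_bound (h ({i}ᶜ)).2 F hF hFsub'
    have h2 : g i ≤ z := hle.trans (Finset.sup'_le hF id hzb)
    exact hg2 i ((h ({i}ᶜ)).2.2.2 _ _ h2 hz)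
  tfae_finish
end

section
/- Let L be an algebraic lattice (a complete lattice in which every element is a join of compact elements) which is modular. Then L is well-founded if and only if the join-semilattice K(L) of compact elements of L is well-founded and contains no infinite independent subset. -/
open Set

/-- Compact element of a complete lattice, with the definition Mathlib had in December 2024. -/
def CompleteLattice.IsCompactElement {α : Type*} [CompleteLattice α] (k : α) :=
  ∀ s : Set α, k ≤ sSup s → ∃ t : Finset α, ↑t ⊆ s ∧ k ≤ t.sup id

section AMWFHelpers

open CompleteLattice

private lemma amwf_no_desc {α : Type*} {r : α → α → Prop} (wf : WellFounded r) (f : ℕ → α)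
    (h : ∀ n, r (f (n + 1)) (f n)) : False := by
  obtain ⟨m, ⟨n, rfl⟩, hmin⟩ := wf.has_min (Set.range f) ⟨f 0, 0, rfl⟩
  exact hmin (f (n + 1)) ⟨n + 1, rfl⟩ (h n)

private lemma amwf_exists_seq {σ : Sort*} (init : σ) (R : σ → σ → Prop)
    (h : ∀ s, ∃ t, R s t) : ∃ f : ℕ → σ, f 0 = init ∧ ∀ n, R (f n) (f (n + 1)) := by
  choose g hg using h
  refine ⟨fun n => Nat.rec init (fun _ s => g s) n, rfl, fun n => hg _⟩

private lemma amwf_isCompact_sup {L : Type*} [CompleteLattice L] {x y : L}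
    (hx : CompleteLattice.IsCompactElement x) (hy : CompleteLattice.IsCompactElement y) : CompleteLattice.IsCompactElement (x ⊔ y) := by
  classical
  intro s hs
  obtain ⟨t₁, ht₁, hx'⟩ := hx s (le_sup_left.trans hs)
  obtain ⟨t₂, ht₂, hy'⟩ := hy s (le_sup_right.trans hs)
  refine ⟨t₁ ∪ t₂, ?_, ?_⟩
  · rw [Finset.coe_union]
    exact Set.union_subset ht₁ ht₂
  · rw [Finset.sup_union]
    exact sup_le (hx'.trans le_sup_left) (hy'.trans le_sup_right)

private lemma amwf_le_of_compact_le {L : Type*} [CompleteLattice L]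
    (halg : ∀ x : L, ∃ s : Set L, (∀ c ∈ s, CompleteLattice.IsCompactElement c) ∧ sSup s = x)
    {u v : L} (h : ∀ c : L, CompleteLattice.IsCompactElement c → c ≤ u → c ≤ v) : u ≤ v := by
  obtain ⟨s, hs, hsup⟩ := halg u
  rw [← hsup]
  exact sSup_le fun c hc => h c (hs c hc) (hsup ▸ le_sSup hc)

private lemma amwf_exists_compact_not_le {L : Type*} [CompleteLattice L]
    (halg : ∀ x : L, ∃ s : Set L, (∀ c ∈ s, CompleteLattice.IsCompactElement c) ∧ sSup s = x)
    {u v : L} (h : ¬ u ≤ v) : ∃ c : L, CompleteLattice.IsCompactElement c ∧ c ≤ u ∧ ¬ c ≤ v := by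
  by_contra hc
  push_neg at hc
  exact h (amwf_le_of_compact_le halg hc)

/-- The key descent step: given a strictly decreasing sequence in an algebraic modular
lattice with no infinite independent set of compacts, there is a compact element `g`
below the first term and a strictly decreasing sequence lying strictly below `g`. -/
private lemma amwf_descent_step {L : Type*} [CompleteLattice L] [IsModularLattice L]
    (halg : ∀ x : L, ∃ s : Set L, (∀ c ∈ s, CompleteLattice.IsCompactElement c) ∧ sSup s = x)
    (hind : ¬ ∃ X : Set L, (∀ x ∈ X, CompleteLattice.IsCompactElement x) ∧ X.Infinite ∧ IndepSet X)
    (a : ℕ → L) (ha : ∀ n, a (n + 1) < a n) :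
    ∃ g : L, CompleteLattice.IsCompactElement g ∧ g ≤ a 0 ∧
      ∃ b : ℕ → L, (∀ n, b (n + 1) < b n) ∧ ∀ n, b n < g := by
  classical
  have haanti : Antitone a := antitone_nat_of_succ_le fun n => (ha n).le
  by_cases hF : ∃ N : ℕ, ∃ g : L, CompleteLattice.IsCompactElement g ∧ g ≤ a 0 ∧ ¬ g ≤ a N ∧
      ∀ d : L, CompleteLattice.IsCompactElement d → d ≤ a N → ∀ N', N < N' → d ≤ g ⊔ a N'
  · obtain ⟨N, g, hgc, hg0, hgN, hstep⟩ := hF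
    have key : ∀ m, a (N + m) ≤ g ⊔ a (N + m + 1) := by
      intro m
      refine amwf_le_of_compact_le halg fun c hc hcle => ?_
      exact hstep c hc (hcle.trans (haanti (Nat.le_add_right N m))) (N + m + 1)
        (Nat.lt_succ_of_le (Nat.le_add_right N m))
    refine ⟨g, hgc, hg0, fun m => g ⊓ a (N + m), fun m => ?_, fun m => ?_⟩
    · show g ⊓ a (N + m + 1) < g ⊓ a (N + m)
      have hle : g ⊓ a (N + m + 1) ≤ g ⊓ a (N + m) :=
        inf_le_inf_left g (haanti (Nat.le_succ _))
      refine lt_of_le_of_ne hle fun heq => ?_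
      have hinf : a (N + m) ⊓ g ≤ a (N + m + 1) ⊓ g := by
        rw [inf_comm (a (N + m)) g, inf_comm (a (N + m + 1)) g, heq]
      have hsup : a (N + m) ⊔ g ≤ a (N + m + 1) ⊔ g := by
        refine sup_le ((key m).trans ?_) le_sup_right
        rw [sup_comm]
      exact (ha (N + m)).ne
        (eq_of_le_of_inf_le_of_sup_le (haanti (Nat.le_succ (N + m))) hinf hsup)
    · show g ⊓ a (N + m) < g
      refine lt_of_le_of_ne inf_le_left fun heq => ?_
      have : g ≤ a N := by
        calc g = g ⊓ a (N + m) := heq.symm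
        _ ≤ a (N + m) := inf_le_right
        _ ≤ a N := haanti (Nat.le_add_right N m)
      exact hgN this
  · exfalso
    push_neg at hF
    -- build the greedy sequences
    obtain ⟨d₀, hd₀c, hd₀le, hd₀n⟩ := amwf_exists_compact_not_le halg (ha 0).not_ge
    have main : ∃ (x : ℕ → L) (N : ℕ → ℕ) (g : ℕ → L),
        (∀ k, CompleteLattice.IsCompactElement (x k)) ∧ g 0 = x 0 ∧ (¬ x 0 ≤ a (N 0)) ∧
        ∀ k, x (k + 1) ≤ a (N k) ∧ g (k + 1) = g k ⊔ x (k + 1) ∧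
          N k < N (k + 1) ∧ ¬ x (k + 1) ≤ g k ⊔ a (N (k + 1)) := by
      have hex : ∀ s : {p : L × L × ℕ // CompleteLattice.IsCompactElement p.1 ∧ CompleteLattice.IsCompactElement p.2.1 ∧
            p.2.1 ≤ a 0 ∧ ¬ p.2.1 ≤ a p.2.2},
          ∃ t : {p : L × L × ℕ // CompleteLattice.IsCompactElement p.1 ∧ CompleteLattice.IsCompactElement p.2.1 ∧
            p.2.1 ≤ a 0 ∧ ¬ p.2.1 ≤ a p.2.2},
          t.1.1 ≤ a s.1.2.2 ∧ t.1.2.1 = s.1.2.1 ⊔ t.1.1 ∧ s.1.2.2 < t.1.2.2 ∧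
            ¬ t.1.1 ≤ s.1.2.1 ⊔ a t.1.2.2 := by
        rintro ⟨⟨xx, gg, NN⟩, hxc, hgc, hgle, hgN⟩
        obtain ⟨e, hec, hele, N', hNN', hen⟩ := hF NN gg hgc hgle hgN
        refine ⟨⟨(e, gg ⊔ e, N'), hec, amwf_isCompact_sup hgc hec,
          sup_le hgle (hele.trans (haanti (Nat.zero_le _))), fun h => ?_⟩,
          hele, rfl, hNN', hen⟩
        exact hen ((le_sup_right.trans h).trans le_sup_right)
      obtain ⟨f, hf0, hfR⟩ := amwf_exists_seq
        (⟨(d₀, d₀, 1), hd₀c, hd₀c, hd₀le, hd₀n⟩ :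
          {p : L × L × ℕ // CompleteLattice.IsCompactElement p.1 ∧ CompleteLattice.IsCompactElement p.2.1 ∧
            p.2.1 ≤ a 0 ∧ ¬ p.2.1 ≤ a p.2.2}) _ hex
      refine ⟨fun k => (f k).1.1, fun k => (f k).1.2.2, fun k => (f k).1.2.1,
        fun k => (f k).2.1, ?_, ?_, fun k => hfR k⟩
      · show (f 0).1.2.1 = (f 0).1.1
        rw [hf0]
      · show ¬ (f 0).1.1 ≤ a (f 0).1.2.2
        rw [hf0]
        exact hd₀n
    obtain ⟨x, N, g, hxc, hg0eq, hx0N, hstep⟩ := main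
    have c2 : ∀ k, x (k + 1) ≤ a (N k) := fun k => (hstep k).1
    have c1 : ∀ k, g (k + 1) = g k ⊔ x (k + 1) := fun k => (hstep k).2.1
    have c3 : ∀ k, N k < N (k + 1) := fun k => (hstep k).2.2.1
    have c4 : ∀ k, ¬ x (k + 1) ≤ g k ⊔ a (N (k + 1)) := fun k => (hstep k).2.2.2
    have hNmono : Monotone N := (strictMono_nat_of_lt_succ c3).monotone
    have hgsup : ∀ k, g k = (Finset.range (k + 1)).sup x := by
      intro k
      induction k with
      | zero => rw [Finset.range_one, Finset.sup_singleton]; exact hg0eq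
      | succ k ih =>
        rw [c1 k, ih]
        conv_rhs => rw [Finset.range_add_one, Finset.sup_insert]
        exact sup_comm _ _
    -- The main invariant
    have Inv : ∀ k, ∀ i, i ≤ k →
        ¬ x i ≤ (((Finset.range (k + 1)).erase i).sup x) ⊔ a (N k) := by
      intro k
      induction k with
      | zero =>
        intro i hi
        rw [Nat.le_zero.mp hi]
        rw [Finset.range_one, Finset.erase_singleton, Finset.sup_empty, bot_sup_eq]
        exact hx0N
      | succ k ih =>
        intro i hi
        rcases Nat.eq_or_lt_of_le hi with heq | hlt
        · subst heq
          rw [Finset.range_add_one, Finset.erase_insert Finset.notMem_range_self, ← hgsup k]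
          exact c4 k
        · have hik : i ≤ k := Nat.lt_succ_iff.mp hlt
          intro hcon
          refine ih i hik (hcon.trans ?_)
          rw [Finset.range_add_one,
            Finset.erase_insert_of_ne (by omega : (k + 1 : ℕ) ≠ i), Finset.sup_insert]
          refine sup_le (sup_le ((c2 k).trans le_sup_right) le_sup_left)
            ((haanti (c3 k).le).trans le_sup_right)
    have hnotle : ∀ i, ¬ x i ≤ a (N i) := fun i hle =>
      Inv i i le_rfl (hle.trans le_sup_right)
    have hlt' : ∀ i j, i < j → x j ≤ a (N i) := by
      intro i j hij
      obtain ⟨j', rfl⟩ : ∃ j', j = j' + 1 := ⟨j - 1, by omega⟩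
      exact (c2 j').trans (haanti (hNmono (by omega : i ≤ j')))
    have hinj : Function.Injective x := by
      intro i j hx
      by_contra hne
      rcases lt_or_gt_of_ne hne with h | h
      · exact hnotle i (hx ▸ hlt' i j h)
      · exact hnotle j (hx ▸ hlt' j i h)
    refine hind ⟨Set.range x, ?_, Set.infinite_range_of_injective hinj, ?_⟩
    · rintro y ⟨i, rfl⟩; exact hxc i
    · rintro y ⟨i, rfl⟩ F hFne hFsub hle
      have hj : ∀ z ∈ F, ∃ j, x j = z ∧ j ≠ i := by
        intro z hz
        obtain ⟨⟨j, rfl⟩, hne⟩ := hFsub hz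
        refine ⟨j, rfl, fun h => hne ?_⟩
        rw [h]
        exact Set.mem_singleton _
      choose! jf hjf1 hjf2 using hj
      have hik : i ≤ max i (F.sup jf) := le_max_left _ _
      have hsup : F.sup' hFne id ≤
          ((Finset.range (max i (F.sup jf) + 1)).erase i).sup x := by
        refine Finset.sup'_le _ _ fun z hz => ?_
        have hmem : jf z ∈ (Finset.range (max i (F.sup jf) + 1)).erase i :=
          Finset.mem_erase.2 ⟨hjf2 z hz, Finset.mem_range.2
            (Nat.lt_succ_of_le ((Finset.le_sup hz).trans (le_max_right i _)))⟩
        calc (id z : L) = x (jf z) := (hjf1 z hz).symm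
        _ ≤ _ := Finset.le_sup hmem
      exact Inv (max i (F.sup jf)) i hik (hle.trans (hsup.trans le_sup_left))

end AMWFHelpers

/-- An algebraic modular lattice `L` is well-founded iff `K(L)` is well-founded
and contains no infinite independent subset. -/
theorem algebraic_modular_wellFounded_iff {L : Type*} [CompleteLattice L] [IsModularLattice L]
    (halg : ∀ x : L, ∃ s : Set L, (∀ c ∈ s, CompleteLattice.IsCompactElement c) ∧ sSup s = x) :
    WellFounded ((· < ·) : L → L → Prop) ↔
      (WellFounded (fun a b : {c : L // CompleteLattice.IsCompactElement c} => a < b) ∧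
        ¬ ∃ X : Set L, (∀ x ∈ X, CompleteLattice.IsCompactElement x) ∧ X.Infinite ∧
            IndepSet X) := by
  classical
  constructor
  · intro hwf
    constructor
    · exact Subrelation.wf (fun {p q} h => show Subtype.val p < Subtype.val q from h)
        (InvImage.wf Subtype.val hwf)
    · rintro ⟨X, hXc, hXinf, hXind⟩
      have hemb : ℕ ↪ X := hXinf.natEmbedding
      set e : ℕ → L := fun n => (hemb n).1 with he
      have heinj : Function.Injective e :=
        Subtype.coe_injective.comp hemb.injective
      have heX : ∀ n, e n ∈ X := fun n => (hemb n).2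
      set b : ℕ → L := fun n => sSup (e '' Set.Ici n) with hb
      have hble : ∀ n, b (n + 1) ≤ b n := fun n =>
        sSup_le_sSup (Set.image_mono (Set.Ici_subset_Ici.2 (Nat.le_succ n)))
      have hmem : ∀ n, e n ≤ b n := fun n => le_sSup ⟨n, le_refl n, rfl⟩
      have key : ∀ n, ¬ e n ≤ b (n + 1) := by
        intro n hle
        obtain ⟨t, htsub, htle⟩ := hXc (e n) (heX n) (e '' Set.Ici (n + 1)) hle
        rcases t.eq_empty_or_nonempty with rfl | htne
        · rw [Finset.sup_empty] at htle
          refine hXind (e n) (heX n) {e (n + 1)} (Finset.singleton_nonempty _) ?_ ?_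
          · intro z hz
            rw [Finset.coe_singleton, Set.mem_singleton_iff] at hz
            subst hz
            exact ⟨heX (n + 1), fun h => (by omega : n + 1 ≠ n) (heinj h)⟩
          · rw [Finset.sup'_singleton]
            exact htle.trans bot_le
        · refine hXind (e n) (heX n) t htne ?_ ?_
          · intro z hz
            obtain ⟨m, hm, rfl⟩ := htsub hz
            refine ⟨heX m, fun h => ?_⟩
            have h2 := heinj (Set.mem_singleton_iff.mp h)
            rw [Set.mem_Ici] at hm
            omega
          · rw [Finset.sup'_eq_sup htne id]
            exact htle
      refine amwf_no_desc hwf b fun n => lt_of_le_of_ne (hble n) fun h => ?_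
      exact key n (by rw [h]; exact hmem n)
  · rintro ⟨hK, hind⟩
    by_contra hnwf
    rw [RelEmbedding.wellFounded_iff_isEmpty, not_isEmpty_iff] at hnwf
    obtain ⟨emb⟩ := hnwf
    have ha : ∀ n, emb (n + 1) < emb n := fun n => emb.map_rel_iff.2 (Nat.lt_succ_self n)
    obtain ⟨g0, hg0c, _, b0, hb0dec, hb0lt⟩ := amwf_descent_step halg hind (fun n => emb n) ha
    have hex : ∀ s : {p : L × (ℕ → L) // CompleteLattice.IsCompactElement p.1 ∧
          (∀ n, p.2 (n + 1) < p.2 n) ∧ ∀ n, p.2 n < p.1},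
        ∃ t : {p : L × (ℕ → L) // CompleteLattice.IsCompactElement p.1 ∧
          (∀ n, p.2 (n + 1) < p.2 n) ∧ ∀ n, p.2 n < p.1}, t.1.1 < s.1.1 := by
      rintro ⟨⟨g, bb⟩, hgc, hbdec, hblt⟩
      obtain ⟨g', hg'c, hg'le, b', hb'dec, hb'lt⟩ := amwf_descent_step halg hind bb hbdec
      exact ⟨⟨(g', b'), hg'c, hb'dec, hb'lt⟩, lt_of_le_of_lt hg'le (hblt 0)⟩
    obtain ⟨f, -, hfdec⟩ := amwf_exists_seq
      (⟨(g0, b0), hg0c, hb0dec, hb0lt⟩ :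
        {p : L × (ℕ → L) // CompleteLattice.IsCompactElement p.1 ∧
          (∀ n, p.2 (n + 1) < p.2 n) ∧ ∀ n, p.2 n < p.1}) _ hex
    exact amwf_no_desc hK (fun n => ⟨(f n).1.1, (f n).2.1⟩)
      (fun n => Subtype.mk_lt_mk.2 (hfdec n))
end

section
/- For a join-semilattice P, the following are equivalent: (i) P is well-founded and has no infinite antichain (i.e. P is wqo); (ii) P contains no infinite independent subset and there exist a well-founded poset Q and an embedding of P into I_{<ω}(Q) as a join-subsemilattice. -/
open Set

section Helpers

theorem noDescend {α : Type*} {r : α → α → Prop} (wf : WellFounded r) (g : ℕ → α)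
    (h : ∀ n, r (g (n+1)) (g n)) : False := by
  have key : ∀ a, Acc r a → ∀ n, g n ≠ a := by
    intro a ha
    induction ha with
    | intro a _ ih =>
      intro n hn
      exact ih (g (n+1)) (hn ▸ h n) (n+1) rfl
  exact key (g 0) (wf.apply _) 0 rfl

variable {Q : Type*} [PartialOrder Q]

/-- Downward closure of a finite set. -/
def dcl (F : Finset Q) : Set Q := {x | ∃ y ∈ F, x ≤ y}

theorem mem_dcl_self {F : Finset Q} {a : Q} (h : a ∈ F) : a ∈ dcl F := ⟨a, h, le_refl a⟩

theorem dcl_lower {F : Finset Q} {x y : Q} (hxy : x ≤ y) (hy : y ∈ dcl F) : x ∈ dcl F := by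
  obtain ⟨z, hz, hyz⟩ := hy
  exact ⟨z, hz, le_trans hxy hyz⟩

theorem dcl_insert {a : Q} [DecidableEq Q] {F : Finset Q} :
    dcl (insert a F) = {x | x ≤ a} ∪ dcl F := by
  ext x
  constructor
  · rintro ⟨y, hy, hxy⟩
    rcases Finset.mem_insert.1 hy with rfl | hyF
    · exact Or.inl hxy
    · exact Or.inr ⟨y, hyF, hxy⟩
  · rintro (hxa | ⟨y, hy, hxy⟩)
    · exact ⟨a, Finset.mem_insert_self _ _, hxa⟩
    · exact ⟨y, Finset.mem_insert_of_mem hy, hxy⟩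

theorem dcl_empty : dcl (∅ : Finset Q) = (∅ : Set Q) := by
  ext x
  simp [dcl]

/-- Strict domination order on finite sets via downward closures. -/
def rr (G F : Finset Q) : Prop := dcl G ⊂ dcl F

theorem acc_congr {F G : Finset Q} (h : dcl F = dcl G) (hF : Acc rr F) : Acc rr G := by
  constructor
  intro y hy
  exact hF.inv (show rr y F by rw [rr, h]; exact hy)

theorem acc_insert [DecidableEq Q] (wfQ : WellFounded ((· < ·) : Q → Q → Prop)) (a : Q) :
    ∀ F : Finset Q, Acc (rr (Q := Q)) F → Acc rr (insert a F) := by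
  classical
  refine WellFounded.induction (C := fun a => ∀ F : Finset Q, Acc (rr (Q := Q)) F → Acc rr (insert a F)) wfQ a ?_
  intro a H F hF
  induction hF with
  | intro F hacc IH =>
    constructor
    intro G hG
    by_cases ha : a ∈ dcl G
    · -- `G` contains `a`; rewrite `G` as `insert a Gf` with `Gf` strictly below `F`
      set Gf := G.filter (fun g => g ∈ dcl F) with hGfdef
      have hsub : dcl Gf ⊆ dcl F := by
        rintro x ⟨y, hy, hxy⟩
        exact dcl_lower hxy (Finset.mem_filter.1 hy).2
      have hGeq : dcl G = dcl (insert a Gf) := by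
        apply Set.Subset.antisymm
        · rintro x ⟨g, hg, hxg⟩
          have hgmem : g ∈ dcl (insert a F) := hG.1 (mem_dcl_self hg)
          rw [dcl_insert] at hgmem
          rcases hgmem with hga | hgf
          · rw [dcl_insert]
            exact Or.inl (le_trans hxg hga)
          · exact ⟨g, Finset.mem_insert_of_mem (Finset.mem_filter.2 ⟨hg, hgf⟩), hxg⟩
        · rintro x ⟨y, hy, hxy⟩
          rcases Finset.mem_insert.1 hy with rfl | hyf
          · exact dcl_lower hxy ha
          · exact ⟨y, (Finset.mem_filter.1 hyf).1, hxy⟩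
      have hne : dcl Gf ≠ dcl F := by
        intro heq
        apply hG.ne
        rw [hGeq, dcl_insert, dcl_insert, heq]
      exact acc_congr hGeq.symm (IH Gf (Set.ssubset_iff_subset_ne.2 ⟨hsub, hne⟩))
    · -- `a ∉ dcl G`: split `G` into the part below `F` and elements strictly below `a`
      set Gf := G.filter (fun g => g ∈ dcl F) with hGfdef
      set Ga := G.filter (fun g => ¬ g ∈ dcl F) with hGadef
      have hsub : dcl Gf ⊆ dcl F := by
        rintro x ⟨y, hy, hxy⟩
        exact dcl_lower hxy (Finset.mem_filter.1 hy).2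
      have hGfacc : Acc rr Gf := by
        by_cases heq : dcl Gf = dcl F
        · exact acc_congr heq.symm (Acc.intro F hacc)
        · exact hacc Gf (Set.ssubset_iff_subset_ne.2 ⟨hsub, heq⟩)
      have hlt : ∀ g ∈ Ga, g < a := by
        intro g hg
        have hgG := (Finset.mem_filter.1 hg).1
        have hgnF := (Finset.mem_filter.1 hg).2
        have hgmem : g ∈ dcl (insert a F) := hG.1 (mem_dcl_self hgG)
        rw [dcl_insert] at hgmem
        rcases hgmem with hga | hgf
        · refine lt_of_le_of_ne hga ?_
          rintro rfl
          exact ha (mem_dcl_self hgG)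
        · exact absurd hgf hgnF
      have fold : ∀ s : Finset Q, (∀ g ∈ s, g < a) → ∀ X : Finset Q,
          Acc (rr (Q := Q)) X → Acc rr (s ∪ X) := by
        intro s
        induction s using Finset.induction_on with
        | empty =>
          intro _ X hX
          simpa using hX
        | @insert g s hgs ih =>
          intro hs X hX
          rw [Finset.insert_union]
          exact H g (hs g (Finset.mem_insert_self _ _)) _
            (ih (fun g' hg' => hs g' (Finset.mem_insert_of_mem hg')) X hX)
      have hGacc : Acc rr (Ga ∪ Gf) := fold Ga hlt Gf hGfacc
      have hunion : Ga ∪ Gf = G := by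
        rw [Finset.union_comm]
        exact Finset.filter_union_filter_not_eq _ G
      rwa [hunion] at hGacc

theorem rr_wf (wfQ : WellFounded ((· < ·) : Q → Q → Prop)) : WellFounded (rr (Q := Q)) := by
  classical
  constructor
  intro F
  induction F using Finset.induction_on with
  | empty =>
    constructor
    intro G hG
    exfalso
    have h1 : dcl G ⊆ (∅ : Set Q) := by
      rw [← dcl_empty]
      exact hG.subset
    exact hG.ne (by rw [Set.subset_empty_iff.1 h1, dcl_empty])
  | @insert a F ha ih => exact acc_insert wfQ a F ih

end Helpers

section ForwardSide

variable {P : Type*} [SemilatticeSup P]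

theorem pwo_of_wf_antichains (wfP : WellFounded ((· < ·) : P → P → Prop))
    (hac : ∀ A : Set P, IsAntichain (· ≤ ·) A → A.Finite) :
    ∀ x : ℕ → P, ∃ m n, m < n ∧ x m ≤ x n := by
  intro x
  obtain ⟨g, hg | hg⟩ := exists_increasing_or_nonincreasing_subseq' (· ≤ ·) x
  · exact ⟨g 0, g 1, g.strictMono Nat.zero_lt_one, hg 0⟩
  · exfalso
    obtain ⟨g', hg' | hg'⟩ := exists_increasing_or_nonincreasing_subseq' (· > ·) (x ∘ g)
    · exact noDescend wfP (fun k => x (g (g' k))) (fun n => hg' n)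
    · set y : ℕ → P := fun k => x (g (g' k)) with hy
      have hnle : ∀ m n, m < n → ¬ y m ≤ y n := by
        intro m n hmn
        exact hg (g' m) (g' n) (g'.strictMono hmn)
      have hnlt : ∀ m n, m < n → ¬ y n < y m := by
        intro m n hmn
        exact hg' m n hmn
      have hyinj : Function.Injective y := by
        intro m n h
        by_contra hne
        rcases Nat.lt_or_ge m n with hmn | hge
        · exact hnle m n hmn (le_of_eq h)
        · exact hnle n m (lt_of_le_of_ne hge (Ne.symm hne)) (le_of_eq h.symm)
      have hanti : IsAntichain (· ≤ ·) (Set.range y) := by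
        rintro a ⟨m, rfl⟩ b ⟨n, rfl⟩ hne hle
        rcases Nat.lt_or_ge m n with hmn | hge
        · exact hnle m n hmn hle
        · have hnm : n < m := lt_of_le_of_ne hge (fun h => hne (by rw [h]))
          exact hnlt n m hnm (lt_of_le_of_ne hle hne)
      exact Set.not_infinite.2 (hac _ hanti) (Set.infinite_range_of_injective hyinj)

/-- strict inclusion between lower sets -/
def lrel (A B : Set P) : Prop := IsLowerSet A ∧ IsLowerSet B ∧ A ⊂ B

theorem lrel_wf (hpwo : ∀ x : ℕ → P, ∃ m n, m < n ∧ x m ≤ x n) :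
    WellFounded (lrel (P := P)) := by
  haveI : IsIrrefl (Set P) lrel := ⟨fun a h => ssubset_irrefl a h.2.2⟩
  haveI : IsTrans (Set P) lrel :=
    ⟨fun a b c h1 h2 => ⟨h1.1, h2.2.1,
      Set.lt_iff_ssubset.1 (lt_trans (Set.lt_iff_ssubset.2 h1.2.2) (Set.lt_iff_ssubset.2 h2.2.2))⟩⟩
  haveI : IsStrictOrder (Set P) lrel := { }
  rw [RelEmbedding.wellFounded_iff_isEmpty]
  constructor
  intro emb
  have hrel : ∀ n, lrel (emb (n+1)) (emb n) := fun n => emb.map_rel_iff.2 (Nat.lt_succ_self n)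
  have hssub : ∀ n, emb (n+1) ⊂ emb n := fun n => (hrel n).2.2
  have hlow : ∀ n, IsLowerSet (emb n) := fun n => (hrel n).2.1
  have hx : ∀ n, ∃ z, z ∈ emb n ∧ z ∉ emb (n+1) := fun n => Set.exists_of_ssubset (hssub n)
  choose z hz1 hz2 using hx
  have hchain : ∀ m n, m ≤ n → emb n ⊆ emb m := by
    intro m n h
    induction h with
    | refl => exact subset_rfl
    | @step k h ih => exact (hssub k).subset.trans ih
  obtain ⟨m, n, hmn, hle⟩ := hpwo z
  have h1 : z n ∈ emb (m+1) := hchain (m+1) n hmn (hz1 n)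
  exact hz2 m (hlow (m+1) hle h1)

theorem downset_decomp (hpwo : ∀ x : ℕ → P, ∃ m n, m < n ∧ x m ≤ x n) (D : Set P) :
    IsLowerSet D → ∃ T : Finset (Set P), (∀ J ∈ T, IsIdeal J ∧ J ⊆ D) ∧ D = ⋃₀ ↑T := by
  classical
  refine WellFounded.induction
    (C := fun D => IsLowerSet D →
      ∃ T : Finset (Set P), (∀ J ∈ T, IsIdeal J ∧ J ⊆ D) ∧ D = ⋃₀ ↑T)
    (lrel_wf hpwo) D ?_
  intro D IH hD
  by_cases hne : D.Nonempty
  · by_cases hdir : ∀ x ∈ D, ∀ y ∈ D, ∃ z ∈ D, x ≤ z ∧ y ≤ z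
    · refine ⟨{D}, ?_, by simp⟩
      intro J hJ
      rw [Finset.mem_singleton] at hJ
      subst hJ
      exact ⟨⟨hne, hdir, fun x y hxy hy => hD hxy hy⟩, subset_rfl⟩
    · push_neg at hdir
      obtain ⟨a, ha, b, hb, hab⟩ := hdir
      set D1 : Set P := {x ∈ D | ¬ a ≤ x} with hD1
      set D2 : Set P := {x ∈ D | ¬ b ≤ x} with hD2
      have hlow1 : IsLowerSet D1 := by
        intro x y hxy hy
        exact ⟨hD hxy hy.1, fun h => hy.2 (le_trans h hxy)⟩
      have hlow2 : IsLowerSet D2 := by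
        intro x y hxy hy
        exact ⟨hD hxy hy.1, fun h => hy.2 (le_trans h hxy)⟩
      have hss1 : D1 ⊂ D := by
        refine Set.ssubset_iff_subset_ne.2 ⟨Set.sep_subset _ _, ?_⟩
        intro h
        have : a ∈ D1 := h ▸ ha
        exact this.2 (le_refl a)
      have hss2 : D2 ⊂ D := by
        refine Set.ssubset_iff_subset_ne.2 ⟨Set.sep_subset _ _, ?_⟩
        intro h
        have : b ∈ D2 := h ▸ hb
        exact this.2 (le_refl b)
      obtain ⟨T1, hT1, hU1⟩ := IH D1 ⟨hlow1, hD, hss1⟩ hlow1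
      obtain ⟨T2, hT2, hU2⟩ := IH D2 ⟨hlow2, hD, hss2⟩ hlow2
      refine ⟨T1 ∪ T2, ?_, ?_⟩
      · intro J hJ
        rcases Finset.mem_union.1 hJ with h | h
        · exact ⟨(hT1 J h).1, (hT1 J h).2.trans (Set.sep_subset _ _)⟩
        · exact ⟨(hT2 J h).1, (hT2 J h).2.trans (Set.sep_subset _ _)⟩
      · have hsplit : D = D1 ∪ D2 := by
          ext x
          constructor
          · intro hx
            by_cases hax : a ≤ x
            · exact Or.inr ⟨hx, fun hbx => hab x hx hax hbx⟩
            · exact Or.inl ⟨hx, hax⟩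
          · rintro (hx | hx) <;> exact hx.1
        rw [hsplit, Finset.coe_union, Set.sUnion_union, ← hU1, ← hU2]
  · refine ⟨∅, by simp, ?_⟩
    rw [Set.not_nonempty_iff_eq_empty.1 hne]
    simp

theorem ideal_sup_mem {I : Set P} (hI : IsIdeal I) {a b : P} (ha : a ∈ I) (hb : b ∈ I) :
    a ⊔ b ∈ I := by
  obtain ⟨z, hz, h1, h2⟩ := hI.2.1 a ha b hb
  exact hI.2.2 _ z (sup_le h1 h2) hz

theorem ideal_subset_of_union {I : Set P} (hI : IsIdeal I) (T : Finset (Set P))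
    (hT : ∀ J ∈ T, IsIdeal J) (hsub : I ⊆ ⋃₀ ↑T) : ∃ J ∈ T, I ⊆ J := by
  classical
  induction T using Finset.induction_on with
  | empty =>
    obtain ⟨w, hw⟩ := hI.1
    simpa using hsub hw
  | @insert J T hJT ih =>
    by_cases h1 : I ⊆ J
    · exact ⟨J, Finset.mem_insert_self _ _, h1⟩
    · by_cases h2 : I ⊆ ⋃₀ ↑T
      · obtain ⟨K, hK, hIK⟩ := ih (fun K hK => hT K (Finset.mem_insert_of_mem hK)) h2
        exact ⟨K, Finset.mem_insert_of_mem hK, hIK⟩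
      · exfalso
        obtain ⟨x, hx, hxJ⟩ := Set.not_subset.1 h1
        obtain ⟨y, hy, hyT⟩ := Set.not_subset.1 h2
        obtain ⟨z, hz, hxz, hyz⟩ := hI.2.1 x hx y hy
        have hzmem := hsub hz
        rw [Finset.coe_insert, Set.sUnion_insert] at hzmem
        rcases hzmem with hzJ | hzT
        · exact hxJ ((hT J (Finset.mem_insert_self _ _)).2.2 x z hxz hzJ)
        · obtain ⟨K, hK, hzK⟩ := hzT
          exact hyT ⟨K, hK, (hT K (Finset.mem_insert_of_mem hK)).2.2 y z hyz hzK⟩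

end ForwardSide

section ForwardEmbed

universe u

variable {P : Type u} [SemilatticeSup P]

theorem forward_embed (wfP : WellFounded ((· < ·) : P → P → Prop))
    (hac : ∀ A : Set P, IsAntichain (· ≤ ·) A → A.Finite) :
    ∃ (Q : Type u) (_ : PartialOrder Q), WellFounded ((· < ·) : Q → Q → Prop) ∧
      ∃ f : P → Set Q, (∀ p, f p ∈ FinGenInit Q) ∧ Function.Injective f ∧
        ∀ a b, f (a ⊔ b) = f a ∪ f b := by
  classical
  have hpwo := pwo_of_wf_antichains wfP hac
  refine ⟨{I : Set P // IsIdeal I}, inferInstance, ?_, ?_⟩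
  · -- well-foundedness of ideals under strict inclusion
    have hw := lrel_wf hpwo
    refine Subrelation.wf (r := InvImage (lrel (P := P)) Subtype.val) ?_ (InvImage.wf _ hw)
    rintro I J hIJ
    have hlow : ∀ K : {I : Set P // IsIdeal I}, IsLowerSet K.1 :=
      fun K => fun x y hxy hy => K.2.2.2 y x hxy hy
    exact ⟨hlow I, hlow J, Set.lt_iff_ssubset.1 (Subtype.coe_lt_coe.2 hIJ)⟩
  · refine ⟨fun p => {I : {I : Set P // IsIdeal I} | p ∉ I.1}, ?_, ?_, ?_⟩
    · -- finitely generated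
      intro p
      have hlowD : IsLowerSet {x : P | ¬ p ≤ x} :=
        fun x y hxy hy hpx => hy (le_trans hpx hxy)
      obtain ⟨T, hT, hU⟩ := downset_decomp hpwo {x : P | ¬ p ≤ x} hlowD
      refine ⟨T.subtype IsIdeal, ?_⟩
      ext I
      simp only [Set.mem_setOf_eq]
      constructor
      · intro hpI
        have hID : I.1 ⊆ {x : P | ¬ p ≤ x} := by
          intro x hx hpx
          exact hpI (I.2.2.2 p x hpx hx)
        rw [hU] at hID
        obtain ⟨J, hJ, hIJ⟩ := ideal_subset_of_union I.2 T (fun J hJ => (hT J hJ).1) hID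
        exact ⟨⟨J, (hT J hJ).1⟩, Finset.mem_subtype.2 hJ, hIJ⟩
      · rintro ⟨J, hJmem, hIJ⟩ hpI
        have hJT : (J : Set P) ∈ T := Finset.mem_subtype.1 hJmem
        have hpJ : p ∈ (J : Set P) := hIJ hpI
        exact (hT _ hJT).2 hpJ (le_refl p)
    · -- injective
      intro p q hpq
      have key : ∀ a b : P, ({I : {I : Set P // IsIdeal I} | a ∉ I.1} =
          {I : {I : Set P // IsIdeal I} | b ∉ I.1}) → a ≤ b := by
        intro a b hab
        by_contra hnab
        have hideal : IsIdeal {x : P | x ≤ b} :=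
          ⟨⟨b, le_refl b⟩, fun x hx y hy => ⟨b, le_refl b, hx, hy⟩,
            fun x y hxy hy => le_trans hxy hy⟩
        have h1 : (⟨{x : P | x ≤ b}, hideal⟩ : {I : Set P // IsIdeal I}) ∈
            {I : {I : Set P // IsIdeal I} | a ∉ I.1} := hnab
        rw [hab] at h1
        exact h1 (le_refl b)
      exact le_antisymm (key p q hpq) (key q p hpq.symm)
    · -- join
      intro a b
      ext I
      constructor
      · intro h
        by_contra hc
        rw [Set.mem_union] at hc
        push_neg at hc
        simp only [Set.mem_setOf_eq, not_not] at hc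
        exact h (ideal_sup_mem I.2 hc.1 hc.2)
      · intro h hsup
        rcases h with h | h
        · exact h (I.2.2.2 a (a ⊔ b) le_sup_left hsup)
        · exact h (I.2.2.2 b (a ⊔ b) le_sup_right hsup)

end ForwardEmbed

section Converse

variable {Q : Type*} [PartialOrder Q]

/-- From a pairwise ⊄ family of finitely generated downsets, extract a subsequence together
with generators avoiding all later members. -/
theorem extract_avoidant (U : ℕ → Set Q) (A : ℕ → Finset Q) (hU : ∀ i, U i = dcl (A i))
    (hInc : ∀ i j, i ≠ j → ¬ U i ⊆ U j) :
    ∃ n : ℕ → ℕ, StrictMono n ∧ ∃ w : ℕ → Q,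
      (∀ r, w r ∈ A (n r)) ∧ ∀ r s, r < s → w r ∉ U (n s) := by
  classical
  have pigeon : ∀ T : Set ℕ, T.Infinite →
      ∃ g : Q, g ∈ A (sInf T) ∧ {j | j ∈ T ∧ j ≠ sInf T ∧ g ∉ U j}.Infinite := by
    intro T hT
    set i := sInf T with hi
    by_contra hcon
    push_neg at hcon
    have hTsub : T ⊆ insert i (⋃ g ∈ A i, {j | j ∈ T ∧ j ≠ i ∧ g ∉ U j}) := by
      intro j hj
      by_cases hji : j = i
      · exact Set.mem_insert_iff.2 (Or.inl hji)
      · have hnsub : ¬ U i ⊆ U j := hInc i j (fun h => hji h.symm)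
        obtain ⟨x, hxi, hxj⟩ := Set.not_subset.1 hnsub
        rw [hU i] at hxi
        obtain ⟨a, haA, hxa⟩ := hxi
        have haj : a ∉ U j := by
          intro h
          apply hxj
          rw [hU j]
          rw [hU j] at h
          exact dcl_lower hxa h
        exact Set.mem_insert_iff.2 (Or.inr (Set.mem_biUnion haA ⟨hj, hji, haj⟩))
    have hfin : T.Finite := by
      refine Set.Finite.subset (Set.Finite.insert i ?_) hTsub
      exact Set.Finite.biUnion (A i).finite_toSet
        (fun g hg => hcon g hg)
    exact hT hfin
  let next : {T : Set ℕ // T.Infinite} → {T : Set ℕ // T.Infinite} := fun T =>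
    ⟨_, (Classical.choose_spec (pigeon T.1 T.2)).2⟩
  let M : ℕ → {T : Set ℕ // T.Infinite} := fun k => next^[k] ⟨Set.univ, Set.infinite_univ⟩
  have hMsucc : ∀ k, M (k+1) = next (M k) := fun k => Function.iterate_succ_apply' next k _
  set n : ℕ → ℕ := fun k => sInf (M k).1 with hn
  set w : ℕ → Q := fun k => Classical.choose (pigeon (M k).1 (M k).2) with hw
  have hMdesc : ∀ k, (M (k+1)).1 = {j | j ∈ (M k).1 ∧ j ≠ n k ∧ w k ∉ U j} := by
    intro k
    rw [hMsucc k]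
  have hMmem : ∀ k, n k ∈ (M k).1 := fun k => Nat.sInf_mem ((M k).2.nonempty)
  have hMchain : ∀ k l, k ≤ l → (M l).1 ⊆ (M k).1 := by
    intro k l h
    induction h with
    | refl => exact subset_rfl
    | @step m h ih =>
      intro j hj
      rw [hMdesc m] at hj
      exact ih hj.1
  have hmono : StrictMono n := by
    apply strictMono_nat_of_lt_succ
    intro k
    have h1 : n (k+1) ∈ (M (k+1)).1 := hMmem (k+1)
    rw [hMdesc k] at h1
    exact lt_of_le_of_ne (Nat.sInf_le h1.1) (fun h => h1.2.1 h.symm)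
  refine ⟨n, hmono, w, ?_, ?_⟩
  · intro r
    exact (Classical.choose_spec (pigeon (M r).1 (M r).2)).1
  · intro r s hrs
    have h1 : n s ∈ (M s).1 := hMmem s
    have h2 : n s ∈ (M (r+1)).1 := hMchain (r+1) s hrs h1
    rw [hMdesc r] at h2
    exact h2.2.2

/-- The main combinatorial lemma: given a family of finitely generated downsets of a
well-founded poset with "forward-avoidant" generators, one can extract an infinite subfamily
with private points. -/
theorem private_points (wfQ : WellFounded ((· < ·) : Q → Q → Prop))
    (U : ℕ → Set Q) (A : ℕ → Finset Q) (hU : ∀ i, U i = dcl (A i))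
    (w : ℕ → Q) (hw1 : ∀ r, w r ∈ A r) (hw2 : ∀ r s, r < s → w r ∉ U s) :
    ∃ σ : ℕ → ℕ, StrictMono σ ∧ ∃ ρ : ℕ → Q,
      (∀ k, ρ k ∈ U (σ k)) ∧ ∀ k l, k ≠ l → ρ k ∉ U (σ l) := by
  classical
  have hUlow : ∀ i, ∀ x y : Q, x ≤ y → y ∈ U i → x ∈ U i := by
    intro i x y hxy hy
    rw [hU i] at hy ⊢
    exact dcl_lower hxy hy
  set PER : Set Q := {x | {l | x ∈ U l}.Infinite} with hPER
  have hPERlow : ∀ x y : Q, x ≤ y → y ∈ PER → x ∈ PER := by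
    intro x y hxy hy
    exact hy.mono (fun l hl => hUlow l x y hxy hl)
  have wfQs : WellFounded ((· < ·) : {x : Q // x ∉ PER} → {x : Q // x ∉ PER} → Prop) := by
    have hsubrel : Subrelation ((· < ·) : {x : Q // x ∉ PER} → {x : Q // x ∉ PER} → Prop)
        (InvImage ((· < ·) : Q → Q → Prop) Subtype.val) := fun h => Subtype.coe_lt_coe.2 h
    exact Subrelation.wf hsubrel (InvImage.wf _ wfQ)
  set Us : ℕ → Set {x : Q // x ∉ PER} := fun i => {x | x.1 ∈ U i} with hUs
  set Es : ℕ → Finset {x : Q // x ∉ PER} := fun i => (A i).subtype (· ∉ PER) with hEs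
  have hUsdcl : ∀ i, Us i = dcl (Es i) := by
    intro i
    ext x
    constructor
    · intro hx
      have hx' : x.1 ∈ dcl (A i) := by rw [← hU i]; exact hx
      obtain ⟨a, ha, hxa⟩ := hx'
      have haP : a ∉ PER := fun h => x.2 (hPERlow _ _ hxa h)
      exact ⟨⟨a, haP⟩, Finset.mem_subtype.2 ha, hxa⟩
    · rintro ⟨⟨a, haP⟩, haE, hxa⟩
      have haA : a ∈ A i := Finset.mem_subtype.1 haE
      show x.1 ∈ U i
      rw [hU i]
      exact ⟨a, haA, hxa⟩
  have hsupp : ∀ x : {x : Q // x ∉ PER}, {l | x.1 ∈ U l}.Finite :=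
    fun x => Set.not_infinite.1 x.2
  have hwPER : ∀ r, w r ∉ PER := by
    intro r h
    have hsub : {l | w r ∈ U l} ⊆ {l | l ≤ r} := by
      intro l hl
      by_contra hlr
      exact hw2 r l (Nat.lt_of_not_le hlr) hl
    exact h (Set.Finite.subset (Set.finite_Iic r) hsub)
  set ws : ℕ → {x : Q // x ∉ PER} := fun r => ⟨w r, hwPER r⟩ with hws'
  have hws : ∀ r, ws r ∈ Us r := by
    intro r
    show w r ∈ U r
    rw [hU r]
    exact mem_dcl_self (hw1 r)
  set WS : Finset ℕ → Set {x : Q // x ∉ PER} := fun S => ⋃ i ∈ S, Us i with hWS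
  set GW : Finset ℕ → Finset {x : Q // x ∉ PER} := fun S => S.biUnion Es with hGW
  have hWSdcl : ∀ S, WS S = dcl (GW S) := by
    intro S
    ext x
    simp only [hWS, Set.mem_iUnion, exists_prop]
    constructor
    · rintro ⟨i, hi, hx⟩
      rw [hUsdcl i] at hx
      obtain ⟨e, he, hxe⟩ := hx
      exact ⟨e, Finset.mem_biUnion.2 ⟨i, hi, he⟩, hxe⟩
    · rintro ⟨e, he, hxe⟩
      obtain ⟨i, hi, hei⟩ := Finset.mem_biUnion.1 he
      refine ⟨i, hi, ?_⟩
      rw [hUsdcl i]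
      exact ⟨e, hei, hxe⟩
  set Gfam : Set (Finset {x : Q // x ∉ PER}) :=
    {G | ∃ T : Set ℕ, T.Infinite ∧ ∀ i ∈ T, Us i ⊆ dcl G} with hGfam
  have hrrwf := rr_wf (Q := {x : Q // x ∉ PER}) wfQs
  have main : ∃ R0 : Set ℕ, R0.Infinite ∧ ∀ S : Finset ℕ, ↑S ⊆ R0 → ∀ T : Set ℕ,
      T ⊆ R0 → T.Infinite → ∃ i ∈ T, ¬ Us i ⊆ WS S := by
    by_cases hG : Gfam.Nonempty
    · obtain ⟨T0, hT0inf, hT0⟩ := hrrwf.min_mem Gfam hG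
      obtain ⟨i0, hi0⟩ := hT0inf.nonempty
      refine ⟨T0 \ ({i0} ∪ {l | w i0 ∈ U l}), ?_, ?_⟩
      · exact hT0inf.diff ((Set.finite_singleton i0).union (hsupp (ws i0)))
      · intro S hS T hT hTinf
        by_contra hcon
        push_neg at hcon
        have hmem : GW S ∈ Gfam := ⟨T, hTinf, fun i hi => by
          rw [← hWSdcl]
          exact hcon i hi⟩
        have hsub : dcl (GW S) ⊆ dcl (hrrwf.min Gfam hG) := by
          rw [← hWSdcl]
          intro x hx
          simp only [hWS, Set.mem_iUnion, exists_prop] at hx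
          obtain ⟨i, hi, hx⟩ := hx
          exact hT0 i ((hS hi).1) hx
        have hnss : ¬ dcl (GW S) ⊂ dcl (hrrwf.min Gfam hG) := hrrwf.not_lt_min Gfam hmem
        have heq : dcl (GW S) = dcl (hrrwf.min Gfam hG) := by
          by_contra hne2
          exact hnss (Set.ssubset_iff_subset_ne.2 ⟨hsub, hne2⟩)
        have hin : ws i0 ∈ dcl (GW S) := by
          rw [heq]
          exact hT0 i0 hi0 (hws i0)
        rw [← hWSdcl] at hin
        simp only [hWS, Set.mem_iUnion, exists_prop] at hin
        obtain ⟨i, hiS, hi⟩ := hin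
        exact (hS hiS).2 (Or.inr hi)
    · refine ⟨Set.univ, Set.infinite_univ, ?_⟩
      intro S _ T _ hTinf
      by_contra hcon
      push_neg at hcon
      exact hG ⟨GW S, T, hTinf, fun i hi => by
        rw [← hWSdcl]
        exact hcon i hi⟩
  obtain ⟨R0, hR0inf, HNS⟩ := main
  have genex : ∀ (S : Finset ℕ) (i : ℕ), ¬ Us i ⊆ WS S →
      ∃ e : {x : Q // x ∉ PER}, e ∈ Us i ∧ e ∉ WS S := by
    intro S i hni
    obtain ⟨x, hxi, hxS⟩ := Set.not_subset.1 hni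
    rw [hUsdcl i] at hxi
    obtain ⟨e, heE, hxe⟩ := hxi
    refine ⟨e, by rw [hUsdcl i]; exact mem_dcl_self heE, ?_⟩
    intro heS
    apply hxS
    rw [hWSdcl] at heS ⊢
    exact dcl_lower hxe heS
  -- the greedy construction
  set Good : ℕ × {x : Q // x ∉ PER} × Finset ℕ × Set ℕ → Prop := fun st =>
    st.2.2.2.Infinite ∧ st.2.2.2 ⊆ R0 ∧ ↑st.2.2.1 ⊆ R0 ∧
    (∀ m ∈ st.2.2.2, ∀ j ∈ st.2.2.1, j < m) ∧ st.1 ∈ st.2.2.1 ∧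
    st.2.1 ∈ Us st.1 ∧ (∀ j ∈ st.2.2.1, j ≠ st.1 → st.2.1 ∉ Us j) ∧
    (∀ m ∈ st.2.2.2, st.2.1.1 ∉ U m) with hGoodDef
  have step : ∀ st, Good st → ∃ st', Good st' ∧ st'.2.2.1 = insert st'.1 st.2.2.1 ∧
      st'.2.2.2 ⊆ st.2.2.2 ∧ st'.1 ∈ st.2.2.2 := by
    rintro ⟨i, e, S, R⟩ hGood
    obtain ⟨hRinf, hRsub, hSsub, hord, hiS, heU, hepriv, hepool⟩ := hGood
    obtain ⟨i', hi'R, hi'⟩ := HNS S hSsub R hRsub hRinf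
    obtain ⟨e', he'U, he'W⟩ := genex S i' hi'
    refine ⟨(i', e', insert i' S, R \ ({m | m ≤ i'} ∪ {l | e'.1 ∈ U l})),
      ⟨?_, ?_, ?_, ?_, ?_, ?_, ?_, ?_⟩, rfl, Set.diff_subset, hi'R⟩
    · exact hRinf.diff ((Set.finite_Iic i').union (hsupp e'))
    · exact fun m hm => hRsub hm.1
    · rw [Finset.coe_insert]
      exact Set.insert_subset (hRsub hi'R) hSsub
    · rintro m hm j hj
      rcases Finset.mem_insert.1 hj with rfl | hjS
      · exact Nat.lt_of_not_le (fun hle => hm.2 (Or.inl hle))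
      · exact hord m hm.1 j hjS
    · exact Finset.mem_insert_self _ _
    · exact he'U
    · intro j hj hji
      rcases Finset.mem_insert.1 hj with rfl | hjS
      · exact absurd rfl hji
      · intro hmem
        exact he'W (Set.mem_iUnion₂.2 ⟨j, hjS, hmem⟩)
    · intro m hm hmem
      exact hm.2 (Or.inr hmem)
  obtain ⟨i1, hi1R, hi1⟩ := HNS ∅ (by simp) R0 subset_rfl hR0inf
  obtain ⟨e1, he1U, he1W⟩ := genex ∅ i1 hi1
  have hGood0 : Good (i1, e1, {i1}, R0 \ ({m | m ≤ i1} ∪ {l | e1.1 ∈ U l})) := by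
    refine ⟨?_, ?_, ?_, ?_, ?_, ?_, ?_, ?_⟩
    · exact hR0inf.diff ((Set.finite_Iic i1).union (hsupp e1))
    · exact fun m hm => hm.1
    · simpa using hi1R
    · rintro m hm j hj
      rw [Finset.mem_singleton] at hj
      subst hj
      exact Nat.lt_of_not_le (fun hle => hm.2 (Or.inl hle))
    · exact Finset.mem_singleton_self i1
    · exact he1U
    · intro j hj hji
      rw [Finset.mem_singleton] at hj
      exact absurd hj hji
    · intro m hm hmem
      exact hm.2 (Or.inr hmem)
  let T : ℕ → {st : ℕ × {x : Q // x ∉ PER} × Finset ℕ × Set ℕ // Good st} := fun k =>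
    Nat.rec ⟨_, hGood0⟩
      (fun _ p => ⟨Classical.choose (step p.1 p.2), (Classical.choose_spec (step p.1 p.2)).1⟩) k
  have hTspec : ∀ k, (T (k+1)).1.2.2.1 = insert (T (k+1)).1.1 (T k).1.2.2.1 ∧
      (T (k+1)).1.2.2.2 ⊆ (T k).1.2.2.2 ∧ (T (k+1)).1.1 ∈ (T k).1.2.2.2 := by
    intro k
    exact (Classical.choose_spec (step (T k).1 (T k).2)).2
  have hGoodk : ∀ k, Good (T k).1 := fun k => (T k).2
  have hRchain : ∀ k l, k ≤ l → (T l).1.2.2.2 ⊆ (T k).1.2.2.2 := by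
    intro k l h
    induction h with
    | refl => exact subset_rfl
    | @step m h ih => exact ((hTspec m).2.1).trans ih
  have hSchain : ∀ k l, k ≤ l → (T k).1.2.2.1 ⊆ (T l).1.2.2.1 := by
    intro k l h
    induction h with
    | refl => exact Finset.Subset.refl _
    | @step m h ih =>
      refine ih.trans ?_
      rw [(hTspec m).1]
      exact Finset.subset_insert _ _
  have hσS : ∀ k, (T k).1.1 ∈ (T k).1.2.2.1 := fun k => (hGoodk k).2.2.2.2.1
  have hσmono : StrictMono (fun k => (T k).1.1) := by
    apply strictMono_nat_of_lt_succ
    intro k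
    exact (hGoodk k).2.2.2.1 _ (hTspec k).2.2 _ (hσS k)
  refine ⟨fun k => (T k).1.1, hσmono, fun k => (T k).1.2.1.1, ?_, ?_⟩
  · intro k
    exact (hGoodk k).2.2.2.2.2.1
  · intro k l hkl
    rcases Nat.lt_or_ge l k with h | h
    · -- l < k : use privacy within S
      have hmem : (T l).1.1 ∈ (T k).1.2.2.1 := hSchain l k (le_of_lt h) (hσS l)
      have hne : (T l).1.1 ≠ (T k).1.1 := fun heq => (Nat.lt_irrefl k)
        (by have := hσmono.injective heq; omega)
      exact (hGoodk k).2.2.2.2.2.2.1 _ hmem hne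
    · -- k < l : use pool avoidance
      have hlt : k < l := lt_of_le_of_ne h hkl
      obtain ⟨m, rfl⟩ : ∃ m, l = m + 1 := ⟨l - 1, by omega⟩
      have h1 : (T (m+1)).1.1 ∈ (T m).1.2.2.2 := (hTspec m).2.2
      have h2 : (T (m+1)).1.1 ∈ (T k).1.2.2.2 := hRchain k m (by omega) h1
      exact (hGoodk k).2.2.2.2.2.2.2 _ h2

end Converse

section Glue

variable {P : Type*} [SemilatticeSup P] {Q : Type*} [PartialOrder Q]

theorem f_mono (f : P → Set Q) (hjoin : ∀ a b, f (a ⊔ b) = f a ∪ f b)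
    {a b : P} (hab : a ≤ b) : f a ⊆ f b := by
  have h : f b = f a ∪ f b := by
    conv_lhs => rw [← sup_eq_right.2 hab]
    exact hjoin a b
  rw [h]
  exact Set.subset_union_left

theorem f_reflect (f : P → Set Q) (hinj : Function.Injective f)
    (hjoin : ∀ a b, f (a ⊔ b) = f a ∪ f b) {a b : P} (h : f a ⊆ f b) : a ≤ b := by
  have h1 : f (a ⊔ b) = f b := by
    rw [hjoin]
    exact Set.union_eq_self_of_subset_left h
  have h2 := hinj h1
  exact sup_eq_right.1 h2

theorem f_sup' (f : P → Set Q) (hjoin : ∀ a b, f (a ⊔ b) = f a ∪ f b)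
    (F : Finset P) (hF : F.Nonempty) : f (F.sup' hF id) = ⋃ y ∈ F, f y := by
  classical
  induction hF using Finset.Nonempty.cons_induction with
  | singleton a => simp
  | cons a s ha hs ih =>
    rw [Finset.sup'_cons (H := hs), hjoin, ih]
    ext x
    constructor
    · rintro (hx | hx)
      · exact Set.mem_iUnion₂.2 ⟨a, Finset.mem_cons_self a s, hx⟩
      · obtain ⟨y, hy, hxy⟩ := Set.mem_iUnion₂.1 hx
        exact Set.mem_iUnion₂.2 ⟨y, Finset.mem_cons.2 (Or.inr hy), hxy⟩
    · intro hx
      obtain ⟨y, hy, hxy⟩ := Set.mem_iUnion₂.1 hx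
      rcases Finset.mem_cons.1 hy with rfl | hy
      · exact Or.inl hxy
      · exact Or.inr (Set.mem_iUnion₂.2 ⟨y, hy, hxy⟩)

theorem converse_wf (wfQ : WellFounded ((· < ·) : Q → Q → Prop)) (f : P → Set Q)
    (hFG : ∀ p, f p ∈ FinGenInit Q) (hinj : Function.Injective f)
    (hjoin : ∀ a b, f (a ⊔ b) = f a ∪ f b) :
    WellFounded ((· < ·) : P → P → Prop) := by
  rw [RelEmbedding.wellFounded_iff_isEmpty]
  constructor
  intro emb
  have hlt : ∀ n, emb (n+1) < emb n := fun n => emb.map_rel_iff.2 (Nat.lt_succ_self n)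
  have hF : ∀ n, ∃ F : Finset Q, f (emb n) = dcl F := fun n => hFG (emb n)
  choose F hFeq using hF
  have hdesc : ∀ n, rr (F (n+1)) (F n) := by
    intro n
    show dcl (F (n+1)) ⊂ dcl (F n)
    rw [← hFeq, ← hFeq]
    refine Set.ssubset_iff_subset_ne.2 ⟨f_mono f hjoin (hlt n).le, ?_⟩
    intro h
    exact (hlt n).ne (hinj h)
  exact noDescend (rr_wf wfQ) F hdesc

theorem converse_antichain (wfQ : WellFounded ((· < ·) : Q → Q → Prop)) (f : P → Set Q)
    (hFG : ∀ p, f p ∈ FinGenInit Q) (hinj : Function.Injective f)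
    (hjoin : ∀ a b, f (a ⊔ b) = f a ∪ f b)
    (hni : ¬ ∃ X : Set P, X.Infinite ∧ IndepSet X) :
    ∀ A : Set P, IsAntichain (· ≤ ·) A → A.Finite := by
  intro A hA
  by_contra hAfin
  have hAinf : A.Infinite := hAfin
  set a : ℕ → P := fun n => (hAinf.natEmbedding A n).1 with ha
  have hamem : ∀ n, a n ∈ A := fun n => (hAinf.natEmbedding A n).2
  have hainj : Function.Injective a := fun m n h =>
    (hAinf.natEmbedding A).injective (Subtype.ext h)
  have hinc : ∀ i j, i ≠ j → ¬ a i ≤ a j := fun i j hij =>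
    hA (hamem i) (hamem j) (fun h => hij (hainj h))
  have hF : ∀ n, ∃ F : Finset Q, f (a n) = dcl F := fun n => hFG (a n)
  choose F hFeq using hF
  have hIncU : ∀ i j, i ≠ j → ¬ f (a i) ⊆ f (a j) := fun i j hij hsub =>
    hinc i j hij (f_reflect f hinj hjoin hsub)
  obtain ⟨n, hnmono, w, hw1, hw2⟩ :=
    extract_avoidant (fun i => f (a i)) F (fun i => hFeq i) hIncU
  obtain ⟨σ, hσ, ρ, hρ1, hρ2⟩ :=
    private_points wfQ (fun i => f (a (n i))) (fun i => F (n i)) (fun i => hFeq (n i)) w hw1 hw2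
  have hτinj : Function.Injective (fun k => a (n (σ k))) := fun k l h =>
    hσ.injective (hnmono.injective (hainj h))
  apply hni
  refine ⟨Set.range (fun k => a (n (σ k))), Set.infinite_range_of_injective hτinj, ?_⟩
  intro x hx Fs hFs hFsub hle
  obtain ⟨k, rfl⟩ := hx
  have hsub2 : f (a (n (σ k))) ⊆ ⋃ y ∈ Fs, f y := by
    rw [← f_sup' f hjoin Fs hFs]
    have := f_mono f hjoin hle
    simpa using this
  have hρk := hρ1 k
  obtain ⟨y, hyF, hρy⟩ := Set.mem_iUnion₂.1 (hsub2 hρk)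
  have hyX := hFsub hyF
  obtain ⟨l, hl⟩ := hyX.1
  have hlk : l ≠ k := by
    intro h
    subst h
    exact hyX.2 (Set.mem_singleton_iff.2 hl.symm)
  rw [← hl] at hρy
  exact hρ2 k l (Ne.symm hlk) hρy

end Glue


universe u

/-- A join-semilattice `P` is wqo (well-founded with no infinite antichain) iff
`P` has no infinite independent subset and `P` embeds as a join-subsemilattice into
`I_{<ω}(Q)` for some well-founded poset `Q`. -/
theorem wqo_iff_no_indep_and_embeds {P : Type u} [SemilatticeSup P] :
    (WellFounded ((· < ·) : P → P → Prop) ∧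
        ∀ A : Set P, IsAntichain (· ≤ ·) A → A.Finite) ↔
      ((¬ ∃ X : Set P, X.Infinite ∧ IndepSet X) ∧
        ∃ (Q : Type u) (_ : PartialOrder Q), WellFounded ((· < ·) : Q → Q → Prop) ∧
          ∃ f : P → Set Q, (∀ p, f p ∈ FinGenInit Q) ∧ Function.Injective f ∧
            ∀ a b, f (a ⊔ b) = f a ∪ f b) := by
  constructor
  · rintro ⟨wfP, hac⟩
    constructor
    · rintro ⟨X, hXinf, hXind⟩
      have hanti : IsAntichain (· ≤ ·) X := by
        intro x hx y hy hxy hle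
        have hne : ({y} : Finset P).Nonempty := ⟨y, Finset.mem_singleton_self y⟩
        have hsub : ↑({y} : Finset P) ⊆ X \ {x} := by
          intro z hz
          rw [Finset.coe_singleton, Set.mem_singleton_iff] at hz
          subst hz
          exact ⟨hy, fun h => hxy (by rw [Set.mem_singleton_iff] at h; rw [h])⟩
        exact hXind x hx {y} hne hsub (by simpa using hle)
      exact hXinf (hac X hanti)
    · exact forward_embed wfP hac
  · rintro ⟨hni, Q, instQ, wfQ, f, hFG, hinj, hjoin⟩
    exact ⟨converse_wf wfQ f hFG hinj hjoin, converse_antichain wfQ f hFG hinj hjoin hni⟩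
end
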